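/- Let μ₁, μ₂ ∈ M₊(𝕋). The Dirichlet-type space D(μ₁,μ₂) is complete: if (f_n) is a sequence in D(μ₁,μ₂) with ‖f_n − f_m‖_{D(μ₁,μ₂)} → 0 as n, m → ∞, then there exists f ∈ D(μ₁,μ₂) such that ‖f_n − f‖_{D(μ₁,μ₂)} → 0 as n → ∞. -/

import Mathlib

open MeasureTheory Complex Set
open scoped ENNReal Real NNReal

noncomputable section

/-- Normalized arc-length measure on the unit circle, parametrized by `θ ∈ (0, 2π]`. -/
def mT : Measure ℝ :=
  (ENNReal.ofReal (2 * Real.pi))⁻¹ • (volume.restrict (Set.Ioc (0:ℝ) (2 * Real.pi)))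

/-- Normalized area measure on the open unit disc. -/
def mA : Measure ℂ := (ENNReal.ofReal Real.pi)⁻¹ • (volume.restrict (Metric.ball (0:ℂ) 1))

/-- The open unit bidisc. -/
def bidisc : Set (ℂ × ℂ) := {z : ℂ × ℂ | ‖z.1‖ < 1 ∧ ‖z.2‖ < 1}

/-- The Poisson integral of a finite positive Borel measure on the unit circle. -/
def poissonR (μ : Measure (Metric.sphere (0:ℂ) 1)) (w : ℂ) : ℝ :=
  ∫ ζ, (1 - ‖w‖ ^ 2) / ‖w - (ζ : ℂ)‖ ^ 2 ∂μ

/-- Partial derivative in the first variable. -/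
def d1 (f : ℂ × ℂ → ℂ) (z : ℂ × ℂ) : ℂ := deriv (fun w => f (w, z.2)) z.1

/-- Partial derivative in the second variable. -/
def d2 (f : ℂ × ℂ → ℂ) (z : ℂ × ℂ) : ℂ := deriv (fun w => f (z.1, w)) z.2

/-- The Dirichlet integral `D_{μ₁,μ₂}(f)` of a function on the bidisc. -/
def Dint (μ₁ μ₂ : Measure (Metric.sphere (0:ℂ) 1)) (f : ℂ × ℂ → ℂ) : ℝ≥0∞ :=
  (⨆ r ∈ Set.Ioo (0:ℝ) 1, ∫⁻ θ, (∫⁻ z₁,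
      ENNReal.ofReal (‖d1 f (z₁, (r:ℂ) * Complex.exp ((θ:ℂ) * Complex.I))‖ ^ 2
        * poissonR μ₁ z₁) ∂mA) ∂mT)
  + (⨆ r ∈ Set.Ioo (0:ℝ) 1, ∫⁻ θ, (∫⁻ z₂,
      ENNReal.ofReal (‖d2 f ((r:ℂ) * Complex.exp ((θ:ℂ) * Complex.I), z₂)‖ ^ 2
        * poissonR μ₂ z₂) ∂mA) ∂mT)

/-- The squared Hardy norm `‖f‖²_{H²(𝔻²)}`, via suprema of means over tori. -/
def H2norm2 (f : ℂ × ℂ → ℂ) : ℝ≥0∞ :=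
  ⨆ r ∈ Set.Ioo (0:ℝ) 1, ∫⁻ θ₁, (∫⁻ θ₂,
    ENNReal.ofReal (‖f ((r:ℂ) * Complex.exp ((θ₁:ℂ) * Complex.I),
      (r:ℂ) * Complex.exp ((θ₂:ℂ) * Complex.I))‖ ^ 2) ∂mT) ∂mT

/-- Membership in the Dirichlet-type space `D(μ₁, μ₂)`. -/
def MemD (μ₁ μ₂ : Measure (Metric.sphere (0:ℂ) 1)) (f : ℂ × ℂ → ℂ) : Prop :=
  DifferentiableOn ℂ f bidisc ∧ H2norm2 f < ⊤ ∧ Dint μ₁ μ₂ f < ⊤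

/-- The squared norm of the Dirichlet-type space `D(μ₁, μ₂)`. -/
def Dnorm2 (μ₁ μ₂ : Measure (Metric.sphere (0:ℂ) 1)) (f : ℂ × ℂ → ℂ) : ℝ≥0∞ :=
  H2norm2 f + Dint μ₁ μ₂ f

lemma two_pi_pos' : (0:ℝ) < 2 * Real.pi := by positivity

instance : SFinite mT := by unfold mT; infer_instance
instance : SFinite mA := by unfold mA; infer_instance

lemma mT_univ : mT Set.univ = 1 := by
  unfold mT
  rw [Measure.smul_apply, Measure.restrict_apply_univ, Real.volume_Ioc]
  simp only [smul_eq_mul, sub_zero]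
  rw [ENNReal.inv_mul_cancel (by positivity) ENNReal.ofReal_ne_top]

lemma mA_compl_ball : mA (Metric.ball (0:ℂ) 1)ᶜ = 0 := by
  unfold mA
  rw [Measure.smul_apply, Measure.restrict_apply (measurableSet_ball.compl)]
  simp

lemma bidisc_eq : bidisc = (Metric.ball (0:ℂ) 1) ×ˢ (Metric.ball (0:ℂ) 1) := by
  ext z
  simp [bidisc, Metric.mem_ball, Complex.dist_eq]

lemma isOpen_bidisc : IsOpen bidisc := by
  rw [bidisc_eq]; exact Metric.isOpen_ball.prod Metric.isOpen_ball

lemma mem_bidisc {z : ℂ × ℂ} (h1 : ‖z.1‖ < 1) (h2 : ‖z.2‖ < 1) :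
    z ∈ bidisc := ⟨h1, h2⟩

lemma abs_torus {r θ : ℝ} (hr0 : 0 ≤ r) :
    ‖(r:ℂ) * Complex.exp ((θ:ℂ) * Complex.I)‖ = r := by
  rw [norm_mul, Complex.norm_exp]
  simp [Complex.norm_real, _root_.abs_of_nonneg hr0]

lemma torus_mem_ball {r θ : ℝ} (hr0 : 0 ≤ r) (hr : r < 1) :
    (r:ℂ) * Complex.exp ((θ:ℂ) * Complex.I) ∈ Metric.ball (0:ℂ) 1 := by
  rw [Metric.mem_ball, Complex.dist_eq, sub_zero, abs_torus hr0]; exact hr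

-- slices
lemma slice1_diff {h : ℂ × ℂ → ℂ} (hh : DifferentiableOn ℂ h bidisc) {w₂ : ℂ}
    (hw₂ : ‖w₂‖ < 1) :
    DifferentiableOn ℂ (fun w => h (w, w₂)) (Metric.ball (0:ℂ) 1) := by
  have : DifferentiableOn ℂ (fun w : ℂ => (w, w₂)) (Metric.ball (0:ℂ) 1) :=
    (differentiable_id.prodMk (differentiable_const _)).differentiableOn
  exact hh.comp this (fun w hw => by
    refine mem_bidisc ?_ hw₂
    simpa [Complex.dist_eq] using hw)

lemma slice2_diff {h : ℂ × ℂ → ℂ} (hh : DifferentiableOn ℂ h bidisc) {w₁ : ℂ}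
    (hw₁ : ‖w₁‖ < 1) :
    DifferentiableOn ℂ (fun w => h (w₁, w)) (Metric.ball (0:ℂ) 1) := by
  have : DifferentiableOn ℂ (fun w : ℂ => (w₁, w)) (Metric.ball (0:ℂ) 1) :=
    ((differentiable_const _).prodMk differentiable_id).differentiableOn
  exact hh.comp this (fun w hw => by
    refine mem_bidisc hw₁ ?_
    simpa [Complex.dist_eq] using hw)

lemma slice1_diffAt {h : ℂ × ℂ → ℂ} (hh : DifferentiableOn ℂ h bidisc) {z : ℂ × ℂ}
    (hz : z ∈ bidisc) : DifferentiableAt ℂ (fun w => h (w, z.2)) z.1 := by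
  have hA : DifferentiableAt ℂ h z := hh.differentiableAt (isOpen_bidisc.mem_nhds hz)
  exact hA.comp z.1 (differentiableAt_id.prodMk (differentiableAt_const _))

lemma slice2_diffAt {h : ℂ × ℂ → ℂ} (hh : DifferentiableOn ℂ h bidisc) {z : ℂ × ℂ}
    (hz : z ∈ bidisc) : DifferentiableAt ℂ (fun w => h (z.1, w)) z.2 := by
  have hA : DifferentiableAt ℂ h z := hh.differentiableAt (isOpen_bidisc.mem_nhds hz)
  exact hA.comp z.2 ((differentiableAt_const _).prodMk differentiableAt_id)

lemma d1_sub {h₁ h₂ : ℂ × ℂ → ℂ} (hh₁ : DifferentiableOn ℂ h₁ bidisc)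
    (hh₂ : DifferentiableOn ℂ h₂ bidisc) {z : ℂ × ℂ} (hz : z ∈ bidisc) :
    d1 (fun z => h₁ z - h₂ z) z = d1 h₁ z - d1 h₂ z := by
  unfold d1
  exact deriv_sub (slice1_diffAt hh₁ hz) (slice1_diffAt hh₂ hz)

lemma d2_sub {h₁ h₂ : ℂ × ℂ → ℂ} (hh₁ : DifferentiableOn ℂ h₁ bidisc)
    (hh₂ : DifferentiableOn ℂ h₂ bidisc) {z : ℂ × ℂ} (hz : z ∈ bidisc) :
    d2 (fun z => h₁ z - h₂ z) z = d2 h₁ z - d2 h₂ z := by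
  unfold d2
  exact deriv_sub (slice2_diffAt hh₁ hz) (slice2_diffAt hh₂ hz)

lemma d1_of_hasFDerivAt {h : ℂ × ℂ → ℂ} {T : (ℂ × ℂ) →L[ℂ] ℂ} {z : ℂ × ℂ}
    (hh : HasFDerivAt h T z) : d1 h z = T (1, 0) := by
  have hL : HasDerivAt (fun w : ℂ => (w, z.2)) ((1:ℂ), (0:ℂ)) z.1 :=
    (hasDerivAt_id z.1).prodMk (hasDerivAt_const z.1 z.2)
  have : HasDerivAt (fun w => h (w, z.2)) (T (1, 0)) z.1 := by
    simpa [Function.comp_def] using hh.comp_hasDerivAt z.1 hL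
  exact this.deriv

lemma d2_of_hasFDerivAt {h : ℂ × ℂ → ℂ} {T : (ℂ × ℂ) →L[ℂ] ℂ} {z : ℂ × ℂ}
    (hh : HasFDerivAt h T z) : d2 h z = T (0, 1) := by
  have hL : HasDerivAt (fun w : ℂ => (z.1, w)) ((0:ℂ), (1:ℂ)) z.2 :=
    (hasDerivAt_const z.2 z.1).prodMk (hasDerivAt_id z.2)
  have : HasDerivAt (fun w => h (z.1, w)) (T (0, 1)) z.2 := by
    simpa [Function.comp_def] using hh.comp_hasDerivAt z.2 hL
  exact this.deriv

-- poisson kernel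
lemma measurable_poissonR (μ : Measure (Metric.sphere (0:ℂ) 1)) [IsFiniteMeasure μ] :
    Measurable (poissonR μ) := by
  have h1 : Measurable fun p : ℂ × Metric.sphere (0:ℂ) 1 =>
      (1 - ‖p.1‖ ^ 2) / ‖p.1 - (p.2 : ℂ)‖ ^ 2 := by
    apply Measurable.div
    · exact (continuous_const.sub ((continuous_norm.comp continuous_fst).pow 2)).measurable
    · exact ((continuous_norm.comp (continuous_fst.sub
        (continuous_subtype_val.comp continuous_snd))).pow 2).measurable
  exact (h1.stronglyMeasurable.integral_prod_right').measurable

lemma poissonR_nonneg (μ : Measure (Metric.sphere (0:ℂ) 1)) {w : ℂ}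
    (hw : ‖w‖ < 1) : 0 ≤ poissonR μ w := by
  apply integral_nonneg
  intro ζ
  apply div_nonneg
  · nlinarith [norm_nonneg w]
  · positivity

lemma circleMap_eq (r θ : ℝ) : circleMap 0 r θ = (r:ℂ) * Complex.exp ((θ:ℂ) * Complex.I) := by
  simp [circleMap]

lemma cauchy_mean_bound {u : ℂ → ℂ} {r s : ℝ} (hs0 : 0 ≤ s) (hsr : s < r) (hr1 : r < 1)
    (hu : DifferentiableOn ℂ u (Metric.ball (0:ℂ) 1)) {z : ℂ} (hz : ‖z‖ ≤ s) :
    ENNReal.ofReal (‖u z‖) ≤ ENNReal.ofReal (r / (r - s)) *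
      ∫⁻ θ, ENNReal.ofReal (‖u ((r:ℂ) * Complex.exp ((θ:ℂ) * Complex.I))‖) ∂mT := by
  have hr0 : 0 < r := lt_of_le_of_lt hs0 hsr
  have hrs : 0 < r - s := sub_pos.2 hsr
  have hsub : closure (Metric.ball (0:ℂ) r) ⊆ Metric.ball (0:ℂ) 1 := by
    rw [closure_ball (0:ℂ) hr0.ne']
    exact Metric.closedBall_subset_ball hr1
  have hDCC : DiffContOnCl ℂ u (Metric.ball (0:ℂ) r) :=
    DifferentiableOn.diffContOnCl (hu.mono hsub)
  have hzball : z ∈ Metric.ball (0:ℂ) r := by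
    rw [Metric.mem_ball, Complex.dist_eq, sub_zero]; exact lt_of_le_of_lt hz hsr
  have hformula := hDCC.two_pi_i_inv_smul_circleIntegral_sub_inv_smul hzball
  have habs : ∀ θ : ℝ, ‖circleMap 0 r θ‖ = r := by
    intro θ; rw [norm_circleMap_zero, _root_.abs_of_pos hr0]
  have hdist : ∀ θ : ℝ, r - s ≤ ‖circleMap 0 r θ - z‖ := by
    intro θ
    calc r - s ≤ ‖circleMap 0 r θ‖ - ‖z‖ := by
          rw [habs]; linarith
      _ ≤ ‖circleMap 0 r θ - z‖ := by
          simpa using norm_sub_norm_le (circleMap 0 r θ) z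
  have hucont : Continuous fun θ : ℝ => u (circleMap 0 r θ) := by
    refine hu.continuousOn.comp_continuous (continuous_circleMap 0 r) (fun θ => ?_)
    rw [Metric.mem_ball, Complex.dist_eq, sub_zero, habs]
    exact hr1
  have hcont1 : Continuous fun θ : ℝ => ‖u (circleMap 0 r θ)‖ :=
    continuous_norm.comp hucont
  have hker : ∀ θ ∈ Set.Icc (0:ℝ) (2*Real.pi),
      ‖deriv (circleMap 0 r) θ • ((circleMap 0 r θ - z)⁻¹ • u (circleMap 0 r θ))‖ ≤
        (r / (r - s)) * ‖u (circleMap 0 r θ)‖ := by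
    intro θ _
    rw [norm_smul, norm_smul]
    have hd : ‖deriv (circleMap 0 r) θ‖ = r := by
      rw [deriv_circleMap]
      simp [norm_mul, Complex.norm_I, habs θ]
    have hninv : ‖(circleMap 0 r θ - z)⁻¹‖ ≤ (r - s)⁻¹ := by
      rw [norm_inv]
      exact inv_anti₀ hrs (by exact hdist θ)
    rw [hd]
    have hnu : ‖u (circleMap 0 r θ)‖ = ‖u (circleMap 0 r θ)‖ :=
      rfl
    rw [hnu]
    calc r * (‖(circleMap 0 r θ - z)⁻¹‖ * ‖u (circleMap 0 r θ)‖)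
        ≤ r * ((r - s)⁻¹ * ‖u (circleMap 0 r θ)‖) :=
          mul_le_mul_of_nonneg_left
            (mul_le_mul_of_nonneg_right hninv (norm_nonneg _)) hr0.le
      _ = (r / (r - s)) * ‖u (circleMap 0 r θ)‖ := by ring
  have hintR : IntervalIntegrable
      (fun θ => (r / (r - s)) * ‖u (circleMap 0 r θ)‖) volume 0 (2*Real.pi) :=
    (continuous_const.mul hcont1).intervalIntegrable _ _
  have hintL : IntervalIntegrable
      (fun θ => ‖deriv (circleMap 0 r) θ • ((circleMap 0 r θ - z)⁻¹ • u (circleMap 0 r θ))‖)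
      volume 0 (2*Real.pi) := by
    apply Continuous.intervalIntegrable
    apply Continuous.norm
    apply Continuous.fun_smul
    · exact ((continuous_circleMap 0 r).mul continuous_const).congr
        (fun θ => (deriv_circleMap 0 r θ).symm)
    · apply Continuous.fun_smul
      · apply Continuous.inv₀
        · exact (continuous_circleMap 0 r).sub continuous_const
        · intro θ
          intro h0
          have := hdist θ
          rw [h0] at this
          simp at this
          linarith
      · exact hucont
  have hmain : ‖u z‖ ≤ (2*Real.pi)⁻¹ * ((r / (r - s)) *
      ∫ θ in (0:ℝ)..(2*Real.pi), ‖u (circleMap 0 r θ)‖) := by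
    have h1 : ‖u z‖ = (2*Real.pi)⁻¹ *
        ‖∮ w in C(0, r), (w - z)⁻¹ • u w‖ := by
      rw [← hformula, smul_eq_mul, norm_mul]
      have habs2 : ‖(2 * (Real.pi:ℂ) * I)⁻¹‖ = (2*Real.pi)⁻¹ := by
        rw [norm_inv, norm_mul, norm_mul, Complex.norm_two, Complex.norm_I,
          Complex.norm_real, Real.norm_eq_abs, _root_.abs_of_pos Real.pi_pos, mul_one]
      rw [habs2]
    rw [h1]
    have h2 : ‖∮ w in C(0, r), (w - z)⁻¹ • u w‖ ≤
        ∫ θ in (0:ℝ)..(2*Real.pi), (r / (r - s)) * ‖u (circleMap 0 r θ)‖ := by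
      rw [circleIntegral]
      calc ‖∫ θ in (0:ℝ)..(2*Real.pi), deriv (circleMap 0 r) θ •
            ((circleMap 0 r θ - z)⁻¹ • u (circleMap 0 r θ))‖
          ≤ ∫ θ in (0:ℝ)..(2*Real.pi), ‖deriv (circleMap 0 r) θ •
            ((circleMap 0 r θ - z)⁻¹ • u (circleMap 0 r θ))‖ :=
            intervalIntegral.norm_integral_le_integral_norm two_pi_pos'.le
        _ ≤ _ := intervalIntegral.integral_mono_on two_pi_pos'.le hintL hintR hker
    calc (2*Real.pi)⁻¹ * ‖∮ w in C(0, r), (w - z)⁻¹ • u w‖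
        ≤ (2*Real.pi)⁻¹ * ∫ θ in (0:ℝ)..(2*Real.pi),
            (r / (r - s)) * ‖u (circleMap 0 r θ)‖ := by
          apply mul_le_mul_of_nonneg_left h2
          positivity
      _ = (2*Real.pi)⁻¹ * ((r / (r - s)) *
            ∫ θ in (0:ℝ)..(2*Real.pi), ‖u (circleMap 0 r θ)‖) := by
          rw [intervalIntegral.integral_const_mul]
  have hJnn : 0 ≤ ∫ θ in (0:ℝ)..(2*Real.pi), ‖u (circleMap 0 r θ)‖ := by
    apply intervalIntegral.integral_nonneg two_pi_pos'.le
    intro θ _; exact norm_nonneg _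
  have hset : (∫ θ in (0:ℝ)..(2*Real.pi), ‖u (circleMap 0 r θ)‖) =
      ∫ θ in Set.Ioc (0:ℝ) (2*Real.pi), ‖u (circleMap 0 r θ)‖ :=
    intervalIntegral.integral_of_le two_pi_pos'.le
  have hlint : (∫⁻ θ, ENNReal.ofReal
      (‖u ((r:ℂ) * Complex.exp ((θ:ℂ) * Complex.I))‖) ∂mT) =
      (ENNReal.ofReal (2*Real.pi))⁻¹ * ENNReal.ofReal
        (∫ θ in (0:ℝ)..(2*Real.pi), ‖u (circleMap 0 r θ)‖) := by
    unfold mT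
    rw [lintegral_smul_measure]
    congr 1
    rw [hset, ofReal_integral_eq_lintegral_ofReal (hcont1.integrableOn_Ioc)
      (Filter.Eventually.of_forall fun θ => norm_nonneg _)]
    apply lintegral_congr
    intro θ
    simp [circleMap_eq]
  rw [hlint]
  calc ENNReal.ofReal (‖u z‖)
      ≤ ENNReal.ofReal ((2*Real.pi)⁻¹ * ((r / (r - s)) *
          ∫ θ in (0:ℝ)..(2*Real.pi), ‖u (circleMap 0 r θ)‖)) :=
        ENNReal.ofReal_le_ofReal hmain
    _ = (ENNReal.ofReal (2*Real.pi))⁻¹ * (ENNReal.ofReal (r / (r-s)) *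
          ENNReal.ofReal (∫ θ in (0:ℝ)..(2*Real.pi),
            ‖u (circleMap 0 r θ)‖)) := by
        rw [ENNReal.ofReal_mul (by positivity), ENNReal.ofReal_mul (by positivity),
          ENNReal.ofReal_inv_of_pos two_pi_pos']
    _ = ENNReal.ofReal (r / (r - s)) * ((ENNReal.ofReal (2*Real.pi))⁻¹ *
          ENNReal.ofReal (∫ θ in (0:ℝ)..(2*Real.pi),
            ‖u (circleMap 0 r θ)‖)) := by ring

lemma ofReal_sq_rpow {x : ℝ} (hx : 0 ≤ x) :
    ENNReal.ofReal x ^ (2:ℝ) = ENNReal.ofReal (x ^ 2) := by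
  rw [ENNReal.ofReal_rpow_of_nonneg hx (by norm_num : (0:ℝ) ≤ 2)]
  congr 1
  rw [← Real.rpow_natCast x 2]
  norm_num

lemma torus_cont {h : ℂ × ℂ → ℂ} (hc : ContinuousOn h bidisc) {r : ℝ} (hr0 : 0 ≤ r)
    (hr1 : r < 1) : Continuous (fun p : ℝ × ℝ =>
      h ((r:ℂ) * Complex.exp ((p.1:ℂ) * Complex.I), (r:ℂ) * Complex.exp ((p.2:ℂ) * Complex.I))) := by
  apply hc.comp_continuous
  · apply Continuous.prodMk
    · exact continuous_const.mul ((Complex.continuous_ofReal.comp continuous_fst).mul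
        continuous_const).cexp
    · exact continuous_const.mul ((Complex.continuous_ofReal.comp continuous_snd).mul
        continuous_const).cexp
  · intro p
    exact mem_bidisc (by rw [abs_torus hr0]; exact hr1) (by rw [abs_torus hr0]; exact hr1)

/-- Two-variable pointwise bound by the Hardy norm. -/
lemma pointwise_bound {h : ℂ × ℂ → ℂ} (hh : DifferentiableOn ℂ h bidisc) {s r : ℝ}
    (hs0 : 0 ≤ s) (hsr : s < r) (hr1 : r < 1) {z : ℂ × ℂ}
    (h1 : ‖z.1‖ ≤ s) (h2 : ‖z.2‖ ≤ s) :
    ENNReal.ofReal (‖h z‖) ≤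
      (ENNReal.ofReal (r / (r - s))) ^ 2 * (H2norm2 h) ^ (1/2 : ℝ) := by
  have hr0 : 0 < r := lt_of_le_of_lt hs0 hsr
  set C := ENNReal.ofReal (r / (r - s)) with hC
  have hCne : C ≠ ⊤ := ENNReal.ofReal_ne_top
  have hz2 : ‖z.2‖ < 1 := lt_of_le_of_lt h2 (hsr.trans hr1)
  -- First variable
  have step1 : ENNReal.ofReal (‖h z‖) ≤
      C * ∫⁻ θ₁, ENNReal.ofReal (‖h ((r:ℂ) * Complex.exp ((θ₁:ℂ) * Complex.I), z.2)‖) ∂mT := by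
    have := cauchy_mean_bound (u := fun w => h (w, z.2)) hs0 hsr hr1
      (slice1_diff hh hz2) h1
    simpa using this
  -- Second variable inside
  have step2 : ∀ θ₁ : ℝ, ENNReal.ofReal (‖h ((r:ℂ) * Complex.exp ((θ₁:ℂ) * Complex.I), z.2)‖) ≤
      C * ∫⁻ θ₂, ENNReal.ofReal (‖h ((r:ℂ) * Complex.exp ((θ₁:ℂ) * Complex.I),
            (r:ℂ) * Complex.exp ((θ₂:ℂ) * Complex.I))‖) ∂mT := by
    intro θ₁
    have hw1 : ‖(r:ℂ) * Complex.exp ((θ₁:ℂ) * Complex.I)‖ < 1 := by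
      rw [abs_torus hr0.le]; exact hr1
    exact cauchy_mean_bound (u := fun w => h ((r:ℂ) * Complex.exp ((θ₁:ℂ) * Complex.I), w))
      hs0 hsr hr1 (slice2_diff hh hw1) h2
  have step3 : ENNReal.ofReal (‖h z‖) ≤
      C ^ 2 * ∫⁻ θ₁, (∫⁻ θ₂, ENNReal.ofReal (‖h ((r:ℂ) * Complex.exp ((θ₁:ℂ) * Complex.I),
            (r:ℂ) * Complex.exp ((θ₂:ℂ) * Complex.I))‖) ∂mT) ∂mT := by
    calc ENNReal.ofReal (‖h z‖) ≤ C * ∫⁻ θ₁, ENNReal.ofReal (‖h ((r:ℂ) * Complex.exp ((θ₁:ℂ) * Complex.I), z.2)‖) ∂mT := step1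
      _ ≤ C * ∫⁻ θ₁, (C * ∫⁻ θ₂, ENNReal.ofReal (‖h ((r:ℂ) * Complex.exp ((θ₁:ℂ) * Complex.I),
              (r:ℂ) * Complex.exp ((θ₂:ℂ) * Complex.I))‖) ∂mT) ∂mT :=
          mul_le_mul_right (lintegral_mono (fun θ₁ => step2 θ₁)) C
      _ = C ^ 2 * ∫⁻ θ₁, (∫⁻ θ₂, ENNReal.ofReal (‖h ((r:ℂ) * Complex.exp ((θ₁:ℂ) * Complex.I),
              (r:ℂ) * Complex.exp ((θ₂:ℂ) * Complex.I))‖) ∂mT) ∂mT := by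
          rw [lintegral_const_mul' _ _ hCne]; ring
  -- Cauchy-Schwarz on the product measure
  set F : ℝ × ℝ → ℝ≥0∞ := fun p => ENNReal.ofReal (‖h ((r:ℂ) * Complex.exp ((p.1:ℂ) * Complex.I),
          (r:ℂ) * Complex.exp ((p.2:ℂ) * Complex.I))‖) with hF
  have hFmeas : Measurable F := by
    apply ENNReal.measurable_ofReal.comp
    exact (continuous_norm.comp (torus_cont hh.continuousOn hr0.le hr1)).measurable
  have hiter : (∫⁻ θ₁, (∫⁻ θ₂, ENNReal.ofReal (‖h ((r:ℂ) * Complex.exp ((θ₁:ℂ) * Complex.I),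
            (r:ℂ) * Complex.exp ((θ₂:ℂ) * Complex.I))‖) ∂mT) ∂mT) =
      ∫⁻ p, F p ∂(mT.prod mT) :=
    (lintegral_prod F hFmeas.aemeasurable).symm
  have hCS : (∫⁻ p, F p ∂(mT.prod mT)) ≤
      (∫⁻ p, F p ^ (2:ℝ) ∂(mT.prod mT)) ^ (1/2 : ℝ) := by
    have hconj : Real.HolderConjugate 2 2 := Real.HolderConjugate.two_two
    have := ENNReal.lintegral_mul_le_Lp_mul_Lq (mT.prod mT) hconj
      hFmeas.aemeasurable aemeasurable_const (g := fun _ => (1:ℝ≥0∞))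
    simp only [mul_one, ENNReal.one_rpow, lintegral_const, Pi.mul_apply] at this
    have hmass : (mT.prod mT) Set.univ = 1 := by
      rw [← Set.univ_prod_univ, Measure.prod_prod, mT_univ, mul_one]
    rw [hmass, one_mul] at this
    simpa using this
  have hsq : (∫⁻ p, F p ^ (2:ℝ) ∂(mT.prod mT)) ≤ H2norm2 h := by
    have hFsq : ∀ p : ℝ × ℝ, F p ^ (2:ℝ) = ENNReal.ofReal (‖h ((r:ℂ) * Complex.exp ((p.1:ℂ) * Complex.I),
            (r:ℂ) * Complex.exp ((p.2:ℂ) * Complex.I))‖ ^ 2) := by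
      intro p
      simp only [hF]
      exact ofReal_sq_rpow (norm_nonneg _)
    calc (∫⁻ p, F p ^ (2:ℝ) ∂(mT.prod mT))
        = ∫⁻ θ₁, (∫⁻ θ₂, ENNReal.ofReal (‖h ((r:ℂ) * Complex.exp ((θ₁:ℂ) * Complex.I),
                (r:ℂ) * Complex.exp ((θ₂:ℂ) * Complex.I))‖ ^ 2) ∂mT) ∂mT := by
          rw [lintegral_congr hFsq]
          have hmeas2 : Measurable fun p : ℝ × ℝ => ENNReal.ofReal (‖h ((r:ℂ) * Complex.exp ((p.1:ℂ) * Complex.I),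
                  (r:ℂ) * Complex.exp ((p.2:ℂ) * Complex.I))‖ ^ 2) :=
            ENNReal.measurable_ofReal.comp
              (((continuous_norm.comp
                (torus_cont hh.continuousOn hr0.le hr1)).pow 2).measurable)
          exact lintegral_prod _ hmeas2.aemeasurable
      _ ≤ H2norm2 h := by
          apply le_iSup₂ (f := fun (r : ℝ) (_ : r ∈ Set.Ioo (0:ℝ) 1) => ∫⁻ θ₁, (∫⁻ θ₂,
            ENNReal.ofReal (‖h ((r:ℂ) * Complex.exp ((θ₁:ℂ) * Complex.I),
              (r:ℂ) * Complex.exp ((θ₂:ℂ) * Complex.I))‖ ^ 2) ∂mT) ∂mT) r ⟨hr0, hr1⟩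
  calc ENNReal.ofReal (‖h z‖)
      ≤ C ^ 2 * ∫⁻ p, F p ∂(mT.prod mT) := by rw [← hiter]; exact step3
    _ ≤ C ^ 2 * (∫⁻ p, F p ^ (2:ℝ) ∂(mT.prod mT)) ^ (1/2 : ℝ) := mul_le_mul_right hCS _
    _ ≤ C ^ 2 * (H2norm2 h) ^ (1/2 : ℝ) :=
        mul_le_mul_right (ENNReal.rpow_le_rpow hsq (by norm_num)) _

-- measure-theoretic facts about mT.prod mA
lemma mA_ae_ball : ∀ᵐ w ∂mA, w ∈ Metric.ball (0:ℂ) 1 := by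
  rw [ae_iff]
  have : {w : ℂ | ¬ w ∈ Metric.ball (0:ℂ) 1} = (Metric.ball (0:ℂ) 1)ᶜ := rfl
  rw [this]
  exact mA_compl_ball

lemma prod_ae_ball : ∀ᵐ p ∂(mT.prod mA), p.2 ∈ Metric.ball (0:ℂ) 1 := by
  rw [ae_iff]
  have hset : {p : ℝ × ℂ | ¬ p.2 ∈ Metric.ball (0:ℂ) 1} =
      (Set.univ : Set ℝ) ×ˢ (Metric.ball (0:ℂ) 1)ᶜ := by
    ext p; simp
  rw [hset, Measure.prod_prod, mA_compl_ball, mul_zero]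

lemma prod_restrict_eq : (mT.prod mA).restrict ((Set.univ : Set ℝ) ×ˢ Metric.ball (0:ℂ) 1) =
    mT.prod mA := by
  apply Measure.restrict_eq_self_of_ae_mem
  filter_upwards [prod_ae_ball] with p hp
  exact ⟨Set.mem_univ _, hp⟩

lemma aemeasurable_of_contOn_ball {G : ℝ × ℂ → ℂ}
    (hG : ContinuousOn G ((Set.univ : Set ℝ) ×ˢ Metric.ball (0:ℂ) 1)) :
    AEMeasurable G (mT.prod mA) := by
  rw [← prod_restrict_eq]
  exact hG.aemeasurable (MeasurableSet.univ.prod measurableSet_ball)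

lemma tendsto_shrink (c : ℝ) : Filter.Tendsto (fun k : ℕ => c / ((k:ℝ)+2))
    Filter.atTop (nhds 0) :=
  Filter.Tendsto.div_atTop tendsto_const_nhds
    (Filter.tendsto_atTop_add_const_right _ 2 tendsto_natCast_atTop_atTop)

/-- a.e. measurability of `d1` of a holomorphic function along a torus slice. -/
lemma aemeasurable_d1_torus {h : ℂ × ℂ → ℂ} (hh : DifferentiableOn ℂ h bidisc) {r : ℝ}
    (hr0 : 0 < r) (hr1 : r < 1) :
    AEMeasurable (fun p : ℝ × ℂ =>
      d1 h (p.2, (r:ℂ) * Complex.exp ((p.1:ℂ) * Complex.I))) (mT.prod mA) := by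
  set S := (Set.univ : Set ℝ) ×ˢ Metric.ball (0:ℂ) 1 with hS
  set t : ℕ → ℂ → ℝ := fun k w => (1 - ‖w‖) / ((k:ℝ) + 2) with ht
  set Q : ℕ → ℝ × ℂ → ℂ := fun k p =>
    (h (p.2 + ((t k p.2 : ℝ) : ℂ), (r:ℂ) * Complex.exp ((p.1:ℂ) * Complex.I)) -
      h (p.2, (r:ℂ) * Complex.exp ((p.1:ℂ) * Complex.I))) / ((t k p.2 : ℝ) : ℂ) with hQ
  have htpos : ∀ k : ℕ, ∀ w ∈ Metric.ball (0:ℂ) 1, 0 < t k w := by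
    intro k w hw
    rw [Metric.mem_ball, Complex.dist_eq, sub_zero] at hw
    apply div_pos (by linarith) (by positivity)
  have hshift : ∀ k : ℕ, ∀ w ∈ Metric.ball (0:ℂ) 1,
      w + ((t k w : ℝ) : ℂ) ∈ Metric.ball (0:ℂ) 1 := by
    intro k w hw
    have hw' := hw
    rw [Metric.mem_ball, Complex.dist_eq, sub_zero] at hw' ⊢
    calc ‖w + ((t k w : ℝ) : ℂ)‖ ≤ ‖w‖ + ‖((t k w : ℝ) : ℂ)‖ :=
          norm_add_le _ _
      _ = ‖w‖ + t k w := by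
          rw [Complex.norm_real, Real.norm_eq_abs, _root_.abs_of_pos (htpos k w hw)]
      _ < 1 := by
          have h2 : t k w ≤ (1 - ‖w‖) / 2 := by
            apply div_le_div_of_nonneg_left (by linarith) (by norm_num) (by
              push_cast; linarith)
          have : (1 - ‖w‖) / 2 < 1 - ‖w‖ := by linarith
          linarith
  have hQcont : ∀ k, ContinuousOn (Q k) S := by
    intro k
    have htorus : Continuous fun p : ℝ × ℂ => (r:ℂ) * Complex.exp ((p.1:ℂ) * Complex.I) :=
      continuous_const.mul ((Complex.continuous_ofReal.comp continuous_fst).mul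
        continuous_const).cexp
    have htcont : Continuous fun p : ℝ × ℂ => ((t k p.2 : ℝ) : ℂ) := by
      apply Complex.continuous_ofReal.comp
      exact (continuous_const.sub (continuous_norm.comp continuous_snd)).div_const _
    have hφ1 : ContinuousOn (fun p : ℝ × ℂ =>
        h (p.2 + ((t k p.2 : ℝ) : ℂ), (r:ℂ) * Complex.exp ((p.1:ℂ) * Complex.I))) S := by
      apply hh.continuousOn.comp
      · exact ((continuous_snd.add htcont).prodMk htorus).continuousOn
      · intro p hp
        refine mem_bidisc ?_ (by rw [abs_torus hr0.le]; exact hr1)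
        have := hshift k p.2 hp.2
        rwa [Metric.mem_ball, Complex.dist_eq, sub_zero] at this
    have hφ0 : ContinuousOn (fun p : ℝ × ℂ =>
        h (p.2, (r:ℂ) * Complex.exp ((p.1:ℂ) * Complex.I))) S := by
      apply hh.continuousOn.comp
      · exact (continuous_snd.prodMk htorus).continuousOn
      · intro p hp
        have hp2 := hp.2
        rw [Metric.mem_ball, Complex.dist_eq, sub_zero] at hp2
        exact ⟨hp2, by rw [abs_torus hr0.le]; exact hr1⟩
    apply ContinuousOn.div (hφ1.sub hφ0) htcont.continuousOn
    intro p hp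
    have := htpos k p.2 hp.2
    simp only [ne_eq, Complex.ofReal_eq_zero]
    linarith
  have hQmeas : ∀ k, AEMeasurable (Q k) (mT.prod mA) := fun k =>
    aemeasurable_of_contOn_ball (hQcont k)
  apply aemeasurable_of_tendsto_metrizable_ae' hQmeas
  filter_upwards [prod_ae_ball] with p hp
  -- difference quotients converge to the partial derivative
  have hzmem : (p.2, (r:ℂ) * Complex.exp ((p.1:ℂ) * Complex.I)) ∈ bidisc := by
    refine mem_bidisc ?_ (by rw [abs_torus hr0.le]; exact hr1)
    rw [Metric.mem_ball, Complex.dist_eq, sub_zero] at hp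
    exact hp
  have hder : HasDerivAt (fun w => h (w, (r:ℂ) * Complex.exp ((p.1:ℂ) * Complex.I)))
      (d1 h (p.2, (r:ℂ) * Complex.exp ((p.1:ℂ) * Complex.I))) p.2 :=
    (slice1_diffAt hh hzmem).hasDerivAt
  rw [hasDerivAt_iff_tendsto_slope] at hder
  have hseq : Filter.Tendsto (fun k : ℕ => p.2 + ((t k p.2 : ℝ) : ℂ)) Filter.atTop
      (nhdsWithin p.2 {p.2}ᶜ) := by
    rw [tendsto_nhdsWithin_iff]
    constructor
    · have h0 : Filter.Tendsto (fun k : ℕ => ((t k p.2 : ℝ) : ℂ)) Filter.atTop (nhds 0) := by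
        have h1 := (Complex.continuous_ofReal.tendsto 0).comp (tendsto_shrink (1 - ‖p.2‖))
        simp only [Function.comp_def, Complex.ofReal_zero] at h1
        exact h1
      simpa using tendsto_const_nhds.add h0
    · filter_upwards with k
      have := htpos k p.2 hp
      simp only [Set.mem_compl_iff, Set.mem_singleton_iff]
      intro hcontra
      have : ((t k p.2 : ℝ) : ℂ) = 0 := by
        have := congrArg (fun x => x - p.2) hcontra
        simpa using this
      rw [Complex.ofReal_eq_zero] at this
      linarith
  have := hder.comp hseq
  apply this.congr
  intro k
  simp only [Function.comp_apply]
  rw [slope_def_field]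
  simp [hQ, add_sub_cancel_left]

/-- a.e. measurability of `d2` of a holomorphic function along a torus slice. -/
lemma aemeasurable_d2_torus {h : ℂ × ℂ → ℂ} (hh : DifferentiableOn ℂ h bidisc) {r : ℝ}
    (hr0 : 0 < r) (hr1 : r < 1) :
    AEMeasurable (fun p : ℝ × ℂ =>
      d2 h ((r:ℂ) * Complex.exp ((p.1:ℂ) * Complex.I), p.2)) (mT.prod mA) := by
  set S := (Set.univ : Set ℝ) ×ˢ Metric.ball (0:ℂ) 1 with hS
  set t : ℕ → ℂ → ℝ := fun k w => (1 - ‖w‖) / ((k:ℝ) + 2) with ht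
  set Q : ℕ → ℝ × ℂ → ℂ := fun k p =>
    (h ((r:ℂ) * Complex.exp ((p.1:ℂ) * Complex.I), p.2 + ((t k p.2 : ℝ) : ℂ)) -
      h ((r:ℂ) * Complex.exp ((p.1:ℂ) * Complex.I), p.2)) / ((t k p.2 : ℝ) : ℂ) with hQ
  have htpos : ∀ k : ℕ, ∀ w ∈ Metric.ball (0:ℂ) 1, 0 < t k w := by
    intro k w hw
    rw [Metric.mem_ball, Complex.dist_eq, sub_zero] at hw
    apply div_pos (by linarith) (by positivity)
  have hshift : ∀ k : ℕ, ∀ w ∈ Metric.ball (0:ℂ) 1,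
      w + ((t k w : ℝ) : ℂ) ∈ Metric.ball (0:ℂ) 1 := by
    intro k w hw
    have hw' := hw
    rw [Metric.mem_ball, Complex.dist_eq, sub_zero] at hw' ⊢
    calc ‖w + ((t k w : ℝ) : ℂ)‖ ≤ ‖w‖ + ‖((t k w : ℝ) : ℂ)‖ :=
          norm_add_le _ _
      _ = ‖w‖ + t k w := by
          rw [Complex.norm_real, Real.norm_eq_abs, _root_.abs_of_pos (htpos k w hw)]
      _ < 1 := by
          have h2 : t k w ≤ (1 - ‖w‖) / 2 := by
            apply div_le_div_of_nonneg_left (by linarith) (by norm_num) (by linarith)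
          have : (1 - ‖w‖) / 2 < 1 - ‖w‖ := by linarith
          linarith
  have hQcont : ∀ k, ContinuousOn (Q k) S := by
    intro k
    have htorus : Continuous fun p : ℝ × ℂ => (r:ℂ) * Complex.exp ((p.1:ℂ) * Complex.I) :=
      continuous_const.mul ((Complex.continuous_ofReal.comp continuous_fst).mul
        continuous_const).cexp
    have htcont : Continuous fun p : ℝ × ℂ => ((t k p.2 : ℝ) : ℂ) := by
      apply Complex.continuous_ofReal.comp
      exact (continuous_const.sub (continuous_norm.comp continuous_snd)).div_const _
    have hφ1 : ContinuousOn (fun p : ℝ × ℂ =>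
        h ((r:ℂ) * Complex.exp ((p.1:ℂ) * Complex.I), p.2 + ((t k p.2 : ℝ) : ℂ))) S := by
      apply hh.continuousOn.comp
      · exact (htorus.prodMk (continuous_snd.add htcont)).continuousOn
      · intro p hp
        have := hshift k p.2 hp.2
        rw [Metric.mem_ball, Complex.dist_eq, sub_zero] at this
        exact ⟨by rw [abs_torus hr0.le]; exact hr1, this⟩
    have hφ0 : ContinuousOn (fun p : ℝ × ℂ =>
        h ((r:ℂ) * Complex.exp ((p.1:ℂ) * Complex.I), p.2)) S := by
      apply hh.continuousOn.comp
      · exact (htorus.prodMk continuous_snd).continuousOn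
      · intro p hp
        have hp2 := hp.2
        rw [Metric.mem_ball, Complex.dist_eq, sub_zero] at hp2
        exact ⟨by rw [abs_torus hr0.le]; exact hr1, hp2⟩
    apply ContinuousOn.div (hφ1.sub hφ0) htcont.continuousOn
    intro p hp
    have := htpos k p.2 hp.2
    simp only [ne_eq, Complex.ofReal_eq_zero]
    linarith
  have hQmeas : ∀ k, AEMeasurable (Q k) (mT.prod mA) := fun k =>
    aemeasurable_of_contOn_ball (hQcont k)
  apply aemeasurable_of_tendsto_metrizable_ae' hQmeas
  filter_upwards [prod_ae_ball] with p hp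
  have hzmem : ((r:ℂ) * Complex.exp ((p.1:ℂ) * Complex.I), p.2) ∈ bidisc := by
    rw [Metric.mem_ball, Complex.dist_eq, sub_zero] at hp
    exact ⟨by rw [abs_torus hr0.le]; exact hr1, hp⟩
  have hder : HasDerivAt (fun w => h ((r:ℂ) * Complex.exp ((p.1:ℂ) * Complex.I), w))
      (d2 h ((r:ℂ) * Complex.exp ((p.1:ℂ) * Complex.I), p.2)) p.2 :=
    (slice2_diffAt hh hzmem).hasDerivAt
  rw [hasDerivAt_iff_tendsto_slope] at hder
  have hseq : Filter.Tendsto (fun k : ℕ => p.2 + ((t k p.2 : ℝ) : ℂ)) Filter.atTop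
      (nhdsWithin p.2 {p.2}ᶜ) := by
    rw [tendsto_nhdsWithin_iff]
    constructor
    · have h0 : Filter.Tendsto (fun k : ℕ => ((t k p.2 : ℝ) : ℂ)) Filter.atTop (nhds 0) := by
        have h1 := (Complex.continuous_ofReal.tendsto 0).comp (tendsto_shrink (1 - ‖p.2‖))
        simp only [Function.comp_def, Complex.ofReal_zero] at h1
        exact h1
      simpa using tendsto_const_nhds.add h0
    · filter_upwards with k
      have := htpos k p.2 hp
      simp only [Set.mem_compl_iff, Set.mem_singleton_iff]
      intro hcontra
      have : ((t k p.2 : ℝ) : ℂ) = 0 := by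
        have := congrArg (fun x => x - p.2) hcontra
        simpa using this
      rw [Complex.ofReal_eq_zero] at this
      linarith
  have := hder.comp hseq
  apply this.congr
  intro k
  simp only [Function.comp_apply]
  rw [slope_def_field]
  simp [hQ, add_sub_cancel_left]

section Fatou

variable (μ : Measure (Metric.sphere (0:ℂ) 1)) [IsFiniteMeasure μ]

/-- integrand of the first Dirichlet term, as function on the product space -/
def F1 (h : ℂ × ℂ → ℂ) (r : ℝ) : ℝ × ℂ → ℝ≥0∞ := fun p =>
  ENNReal.ofReal (‖d1 h (p.2, (r:ℂ) * Complex.exp ((p.1:ℂ) * Complex.I))‖ ^ 2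
    * poissonR μ p.2)

def F2 (h : ℂ × ℂ → ℂ) (r : ℝ) : ℝ × ℂ → ℝ≥0∞ := fun p =>
  ENNReal.ofReal (‖d2 h ((r:ℂ) * Complex.exp ((p.1:ℂ) * Complex.I), p.2)‖ ^ 2
    * poissonR μ p.2)

lemma aemeasurable_F1 {h : ℂ × ℂ → ℂ} (hh : DifferentiableOn ℂ h bidisc) {r : ℝ}
    (hr0 : 0 < r) (hr1 : r < 1) : AEMeasurable (F1 μ h r) (mT.prod mA) := by
  have hG := aemeasurable_d1_torus hh hr0 hr1
  have habs : AEMeasurable (fun p : ℝ × ℂ =>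
      ‖d1 h (p.2, (r:ℂ) * Complex.exp ((p.1:ℂ) * Complex.I))‖) (mT.prod mA) :=
    continuous_norm.measurable.comp_aemeasurable hG
  have h2 : AEMeasurable (fun p : ℝ × ℂ =>
      ‖d1 h (p.2, (r:ℂ) * Complex.exp ((p.1:ℂ) * Complex.I))‖ ^ 2
        * poissonR μ p.2) (mT.prod mA) :=
    (habs.pow_const 2).mul ((measurable_poissonR μ).comp measurable_snd).aemeasurable
  exact ENNReal.measurable_ofReal.comp_aemeasurable h2

lemma aemeasurable_F2 {h : ℂ × ℂ → ℂ} (hh : DifferentiableOn ℂ h bidisc) {r : ℝ}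
    (hr0 : 0 < r) (hr1 : r < 1) : AEMeasurable (F2 μ h r) (mT.prod mA) := by
  have hG := aemeasurable_d2_torus hh hr0 hr1
  have habs : AEMeasurable (fun p : ℝ × ℂ =>
      ‖d2 h ((r:ℂ) * Complex.exp ((p.1:ℂ) * Complex.I), p.2)‖) (mT.prod mA) :=
    continuous_norm.measurable.comp_aemeasurable hG
  have h2 : AEMeasurable (fun p : ℝ × ℂ =>
      ‖d2 h ((r:ℂ) * Complex.exp ((p.1:ℂ) * Complex.I), p.2)‖ ^ 2
        * poissonR μ p.2) (mT.prod mA) :=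
    (habs.pow_const 2).mul ((measurable_poissonR μ).comp measurable_snd).aemeasurable
  exact ENNReal.measurable_ofReal.comp_aemeasurable h2

lemma tonelli_F1 {h : ℂ × ℂ → ℂ} (hh : DifferentiableOn ℂ h bidisc) {r : ℝ}
    (hr0 : 0 < r) (hr1 : r < 1) :
    (∫⁻ θ, (∫⁻ z₁, ENNReal.ofReal (‖d1 h (z₁, (r:ℂ) * Complex.exp ((θ:ℂ) * Complex.I))‖ ^ 2
        * poissonR μ z₁) ∂mA) ∂mT) = ∫⁻ p, F1 μ h r p ∂(mT.prod mA) :=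
  (lintegral_prod _ (aemeasurable_F1 μ hh hr0 hr1)).symm

lemma tonelli_F2 {h : ℂ × ℂ → ℂ} (hh : DifferentiableOn ℂ h bidisc) {r : ℝ}
    (hr0 : 0 < r) (hr1 : r < 1) :
    (∫⁻ θ, (∫⁻ z₂, ENNReal.ofReal (‖d2 h ((r:ℂ) * Complex.exp ((θ:ℂ) * Complex.I), z₂)‖ ^ 2
        * poissonR μ z₂) ∂mA) ∂mT) = ∫⁻ p, F2 μ h r p ∂(mT.prod mA) :=
  (lintegral_prod _ (aemeasurable_F2 μ hh hr0 hr1)).symm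

/-- Fatou-type bound for the first Dirichlet component. -/
lemma fatou_D1 {φ : ℕ → ℂ × ℂ → ℂ} {ψ : ℂ × ℂ → ℂ}
    (hφ : ∀ m, DifferentiableOn ℂ (φ m) bidisc) (hψ : DifferentiableOn ℂ ψ bidisc)
    (hconv : ∀ z ∈ bidisc, Filter.Tendsto (fun m => d1 (φ m) z) Filter.atTop (nhds (d1 ψ z))) :
    (⨆ r ∈ Set.Ioo (0:ℝ) 1, ∫⁻ θ, (∫⁻ z₁, ENNReal.ofReal (‖d1 ψ (z₁, (r:ℂ) * Complex.exp ((θ:ℂ) * Complex.I))‖ ^ 2 * poissonR μ z₁) ∂mA) ∂mT) ≤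
    Filter.liminf (fun m => ⨆ r ∈ Set.Ioo (0:ℝ) 1, ∫⁻ θ, (∫⁻ z₁, ENNReal.ofReal (‖d1 (φ m) (z₁, (r:ℂ) * Complex.exp ((θ:ℂ) * Complex.I))‖ ^ 2 * poissonR μ z₁) ∂mA) ∂mT)
      Filter.atTop := by
  apply iSup₂_le
  intro r hr
  obtain ⟨hr0, hr1⟩ := hr
  rw [tonelli_F1 μ hψ hr0 hr1]
  have hae : ∀ᵐ p ∂(mT.prod mA), F1 μ ψ r p =
      Filter.liminf (fun m => F1 μ (φ m) r p) Filter.atTop := by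
    filter_upwards [prod_ae_ball] with p hp
    have hzmem : (p.2, (r:ℂ) * Complex.exp ((p.1:ℂ) * Complex.I)) ∈ bidisc := by
      rw [Metric.mem_ball, Complex.dist_eq, sub_zero] at hp
      exact ⟨hp, by rw [abs_torus hr0.le]; exact hr1⟩
    have hcont : Continuous fun x : ℂ =>
        ENNReal.ofReal (‖x‖ ^ 2 * poissonR μ p.2) :=
      ENNReal.continuous_ofReal.comp ((continuous_norm.pow 2).mul continuous_const)
    have := (hcont.tendsto _).comp (hconv _ hzmem)
    exact (this.liminf_eq).symm
  calc (∫⁻ p, F1 μ ψ r p ∂(mT.prod mA))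
      = ∫⁻ p, Filter.liminf (fun m => F1 μ (φ m) r p) Filter.atTop ∂(mT.prod mA) :=
        lintegral_congr_ae hae
    _ ≤ Filter.liminf (fun m => ∫⁻ p, F1 μ (φ m) r p ∂(mT.prod mA)) Filter.atTop :=
        lintegral_liminf_le' (fun m => aemeasurable_F1 μ (hφ m) hr0 hr1)
    _ ≤ _ := Filter.liminf_le_liminf (Filter.Eventually.of_forall (fun m => by
        rw [← tonelli_F1 μ (hφ m) hr0 hr1]
        exact le_iSup₂ (f := fun (r : ℝ) (_ : r ∈ Set.Ioo (0:ℝ) 1) =>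
          ∫⁻ θ, (∫⁻ z₁, ENNReal.ofReal (‖d1 (φ m) (z₁, (r:ℂ) * Complex.exp ((θ:ℂ) * Complex.I))‖ ^ 2
              * poissonR μ z₁) ∂mA) ∂mT) r ⟨hr0, hr1⟩))

lemma fatou_D2 {φ : ℕ → ℂ × ℂ → ℂ} {ψ : ℂ × ℂ → ℂ}
    (hφ : ∀ m, DifferentiableOn ℂ (φ m) bidisc) (hψ : DifferentiableOn ℂ ψ bidisc)
    (hconv : ∀ z ∈ bidisc, Filter.Tendsto (fun m => d2 (φ m) z) Filter.atTop (nhds (d2 ψ z))) :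
    (⨆ r ∈ Set.Ioo (0:ℝ) 1, ∫⁻ θ, (∫⁻ z₂, ENNReal.ofReal (‖d2 ψ ((r:ℂ) * Complex.exp ((θ:ℂ) * Complex.I), z₂)‖ ^ 2 * poissonR μ z₂) ∂mA) ∂mT) ≤
    Filter.liminf (fun m => ⨆ r ∈ Set.Ioo (0:ℝ) 1, ∫⁻ θ, (∫⁻ z₂, ENNReal.ofReal (‖d2 (φ m) ((r:ℂ) * Complex.exp ((θ:ℂ) * Complex.I), z₂)‖ ^ 2 * poissonR μ z₂) ∂mA) ∂mT)
      Filter.atTop := by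
  apply iSup₂_le
  intro r hr
  obtain ⟨hr0, hr1⟩ := hr
  rw [tonelli_F2 μ hψ hr0 hr1]
  have hae : ∀ᵐ p ∂(mT.prod mA), F2 μ ψ r p =
      Filter.liminf (fun m => F2 μ (φ m) r p) Filter.atTop := by
    filter_upwards [prod_ae_ball] with p hp
    have hzmem : ((r:ℂ) * Complex.exp ((p.1:ℂ) * Complex.I), p.2) ∈ bidisc := by
      rw [Metric.mem_ball, Complex.dist_eq, sub_zero] at hp
      exact ⟨by rw [abs_torus hr0.le]; exact hr1, hp⟩
    have hcont : Continuous fun x : ℂ =>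
        ENNReal.ofReal (‖x‖ ^ 2 * poissonR μ p.2) :=
      ENNReal.continuous_ofReal.comp ((continuous_norm.pow 2).mul continuous_const)
    have := (hcont.tendsto _).comp (hconv _ hzmem)
    exact (this.liminf_eq).symm
  calc (∫⁻ p, F2 μ ψ r p ∂(mT.prod mA))
      = ∫⁻ p, Filter.liminf (fun m => F2 μ (φ m) r p) Filter.atTop ∂(mT.prod mA) :=
        lintegral_congr_ae hae
    _ ≤ Filter.liminf (fun m => ∫⁻ p, F2 μ (φ m) r p ∂(mT.prod mA)) Filter.atTop :=
        lintegral_liminf_le' (fun m => aemeasurable_F2 μ (hφ m) hr0 hr1)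
    _ ≤ _ := Filter.liminf_le_liminf (Filter.Eventually.of_forall (fun m => by
        rw [← tonelli_F2 μ (hφ m) hr0 hr1]
        exact le_iSup₂ (f := fun (r : ℝ) (_ : r ∈ Set.Ioo (0:ℝ) 1) =>
          ∫⁻ θ, (∫⁻ z₂, ENNReal.ofReal (‖d2 (φ m) ((r:ℂ) * Complex.exp ((θ:ℂ) * Complex.I), z₂)‖ ^ 2
              * poissonR μ z₂) ∂mA) ∂mT) r ⟨hr0, hr1⟩))

end Fatou

/-- integrand of the Hardy norm on the product space -/
def FH (h : ℂ × ℂ → ℂ) (r : ℝ) : ℝ × ℝ → ℝ≥0∞ := fun p =>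
  ENNReal.ofReal (‖h ((r:ℂ) * Complex.exp ((p.1:ℂ) * Complex.I),
    (r:ℂ) * Complex.exp ((p.2:ℂ) * Complex.I))‖ ^ 2)

lemma measurable_FH {h : ℂ × ℂ → ℂ} (hc : ContinuousOn h bidisc) {r : ℝ}
    (hr0 : 0 < r) (hr1 : r < 1) : Measurable (FH h r) :=
  ENNReal.measurable_ofReal.comp
    (((continuous_norm.comp (torus_cont hc hr0.le hr1)).pow 2).measurable)

lemma tonelli_FH {h : ℂ × ℂ → ℂ} (hc : ContinuousOn h bidisc) {r : ℝ}
    (hr0 : 0 < r) (hr1 : r < 1) :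
    (∫⁻ θ₁, (∫⁻ θ₂, ENNReal.ofReal (‖h ((r:ℂ) * Complex.exp ((θ₁:ℂ) * Complex.I),
            (r:ℂ) * Complex.exp ((θ₂:ℂ) * Complex.I))‖ ^ 2) ∂mT) ∂mT) =
      ∫⁻ p, FH h r p ∂(mT.prod mT) :=
  (lintegral_prod _ (measurable_FH hc hr0 hr1).aemeasurable).symm

lemma fatou_H {φ : ℕ → ℂ × ℂ → ℂ} {ψ : ℂ × ℂ → ℂ}
    (hφ : ∀ m, ContinuousOn (φ m) bidisc) (hψ : ContinuousOn ψ bidisc)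
    (hconv : ∀ z ∈ bidisc, Filter.Tendsto (fun m => φ m z) Filter.atTop (nhds (ψ z))) :
    H2norm2 ψ ≤ Filter.liminf (fun m => H2norm2 (φ m)) Filter.atTop := by
  apply iSup₂_le
  intro r hr
  obtain ⟨hr0, hr1⟩ := hr
  rw [tonelli_FH hψ hr0 hr1]
  have hae : ∀ p : ℝ × ℝ, FH ψ r p = Filter.liminf (fun m => FH (φ m) r p) Filter.atTop := by
    intro p
    have hzmem : ((r:ℂ) * Complex.exp ((p.1:ℂ) * Complex.I),
        (r:ℂ) * Complex.exp ((p.2:ℂ) * Complex.I)) ∈ bidisc :=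
      ⟨by rw [abs_torus hr0.le]; exact hr1, by rw [abs_torus hr0.le]; exact hr1⟩
    have hcont : Continuous fun x : ℂ => ENNReal.ofReal (‖x‖ ^ 2) :=
      ENNReal.continuous_ofReal.comp (continuous_norm.pow 2)
    have := (hcont.tendsto _).comp (hconv _ hzmem)
    exact (this.liminf_eq).symm
  calc (∫⁻ p, FH ψ r p ∂(mT.prod mT))
      = ∫⁻ p, Filter.liminf (fun m => FH (φ m) r p) Filter.atTop ∂(mT.prod mT) :=
        lintegral_congr hae
    _ ≤ Filter.liminf (fun m => ∫⁻ p, FH (φ m) r p ∂(mT.prod mT)) Filter.atTop :=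
        lintegral_liminf_le (fun m => measurable_FH (hφ m) hr0 hr1)
    _ ≤ _ := Filter.liminf_le_liminf (Filter.Eventually.of_forall (fun m => by
        rw [← tonelli_FH (hφ m) hr0 hr1]
        exact le_iSup₂ (f := fun (r : ℝ) (_ : r ∈ Set.Ioo (0:ℝ) 1) =>
          ∫⁻ θ₁, (∫⁻ θ₂, ENNReal.ofReal (‖φ m ((r:ℂ) * Complex.exp ((θ₁:ℂ) * Complex.I),
              (r:ℂ) * Complex.exp ((θ₂:ℂ) * Complex.I))‖ ^ 2) ∂mT) ∂mT) r ⟨hr0, hr1⟩))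

lemma sq_split_real (x y : ℂ) {c : ℝ} (hc : 0 ≤ c) :
    ‖x‖ ^ 2 * c ≤ 2 * (‖y‖ ^ 2 * c) + 2 * (‖y - x‖ ^ 2 * c) := by
  have habs : ‖x‖ ≤ ‖y‖ + ‖y - x‖ := by
    have h1 : x = y - (y - x) := by ring
    calc ‖x‖ = ‖y - (y - x)‖ := by rw [← h1]
      _ ≤ ‖y‖ + ‖y - x‖ := by
          simpa using norm_sub_le y (y - x)
  have hsq : ‖x‖ ^ 2 ≤ (‖y‖ + ‖y - x‖) ^ 2 :=
    pow_le_pow_left₀ (norm_nonneg x) habs 2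
  have h1 : ‖x‖ ^ 2 ≤ 2 * ‖y‖ ^ 2 + 2 * ‖y - x‖ ^ 2 := by
    nlinarith [sq_nonneg (‖y‖ - ‖y - x‖)]
  calc ‖x‖ ^ 2 * c ≤ (2 * ‖y‖ ^ 2 + 2 * ‖y - x‖ ^ 2) * c :=
        mul_le_mul_of_nonneg_right h1 hc
    _ = 2 * (‖y‖ ^ 2 * c) + 2 * (‖y - x‖ ^ 2 * c) := by ring

lemma ennreal_sq_split (x y : ℂ) {c : ℝ} (hc : 0 ≤ c) :
    ENNReal.ofReal (‖x‖ ^ 2 * c) ≤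
      2 * ENNReal.ofReal (‖y‖ ^ 2 * c) +
        2 * ENNReal.ofReal (‖y - x‖ ^ 2 * c) := by
  have h2 : (2:ℝ≥0∞) = ENNReal.ofReal 2 := by norm_num
  rw [h2, ← ENNReal.ofReal_mul (by norm_num), ← ENNReal.ofReal_mul (by norm_num),
    ← ENNReal.ofReal_add (by positivity) (by positivity)]
  exact ENNReal.ofReal_le_ofReal (sq_split_real x y hc)

lemma ennreal_sq_split' (x y : ℂ) :
    ENNReal.ofReal (‖x‖ ^ 2) ≤
      2 * ENNReal.ofReal (‖y‖ ^ 2) + 2 * ENNReal.ofReal (‖y - x‖ ^ 2) := by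
  have := ennreal_sq_split x y (c := 1) zero_le_one
  simpa using this

lemma H2_split {φ ψ : ℂ × ℂ → ℂ} (hφ : ContinuousOn φ bidisc) (hψ : ContinuousOn ψ bidisc) :
    H2norm2 ψ ≤ 2 * H2norm2 φ + 2 * H2norm2 (fun z => φ z - ψ z) := by
  apply iSup₂_le
  intro r hr
  obtain ⟨hr0, hr1⟩ := hr
  rw [tonelli_FH hψ hr0 hr1]
  have hv : ContinuousOn (fun z => φ z - ψ z) bidisc := hφ.sub hψ
  calc (∫⁻ p, FH ψ r p ∂(mT.prod mT))
      ≤ ∫⁻ p, (2 * FH φ r p + 2 * FH (fun z => φ z - ψ z) r p) ∂(mT.prod mT) := by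
        apply lintegral_mono
        intro p
        exact ennreal_sq_split' _ _
    _ = 2 * (∫⁻ p, FH φ r p ∂(mT.prod mT)) +
        2 * (∫⁻ p, FH (fun z => φ z - ψ z) r p ∂(mT.prod mT)) := by
        rw [lintegral_add_left' (((measurable_FH hφ hr0 hr1).const_mul 2).aemeasurable),
          lintegral_const_mul' _ _ (by norm_num), lintegral_const_mul' _ _ (by norm_num)]
    _ ≤ 2 * H2norm2 φ + 2 * H2norm2 (fun z => φ z - ψ z) := by
        apply add_le_add
        · apply mul_le_mul_right
          rw [← tonelli_FH hφ hr0 hr1]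
          exact le_iSup₂ (f := fun (r : ℝ) (_ : r ∈ Set.Ioo (0:ℝ) 1) => ∫⁻ θ₁, (∫⁻ θ₂,
            ENNReal.ofReal (‖φ ((r:ℂ) * Complex.exp ((θ₁:ℂ) * Complex.I),
              (r:ℂ) * Complex.exp ((θ₂:ℂ) * Complex.I))‖ ^ 2) ∂mT) ∂mT) r ⟨hr0, hr1⟩
        · apply mul_le_mul_right
          rw [← tonelli_FH hv hr0 hr1]
          exact le_iSup₂ (f := fun (r : ℝ) (_ : r ∈ Set.Ioo (0:ℝ) 1) => ∫⁻ θ₁, (∫⁻ θ₂,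
            ENNReal.ofReal (‖φ ((r:ℂ) * Complex.exp ((θ₁:ℂ) * Complex.I),
              (r:ℂ) * Complex.exp ((θ₂:ℂ) * Complex.I)) -
              ψ ((r:ℂ) * Complex.exp ((θ₁:ℂ) * Complex.I),
              (r:ℂ) * Complex.exp ((θ₂:ℂ) * Complex.I))‖ ^ 2) ∂mT) ∂mT) r ⟨hr0, hr1⟩

lemma D1_split (μ : Measure (Metric.sphere (0:ℂ) 1)) [IsFiniteMeasure μ] {φ ψ : ℂ × ℂ → ℂ}
    (hφ : DifferentiableOn ℂ φ bidisc) (hψ : DifferentiableOn ℂ ψ bidisc) :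
    (⨆ r ∈ Set.Ioo (0:ℝ) 1, ∫⁻ θ, (∫⁻ z₁, ENNReal.ofReal (‖d1 ψ (z₁, (r:ℂ) * Complex.exp ((θ:ℂ) * Complex.I))‖ ^ 2 * poissonR μ z₁) ∂mA) ∂mT) ≤
      2 * (⨆ r ∈ Set.Ioo (0:ℝ) 1, ∫⁻ θ, (∫⁻ z₁, ENNReal.ofReal (‖d1 φ (z₁, (r:ℂ) * Complex.exp ((θ:ℂ) * Complex.I))‖ ^ 2 * poissonR μ z₁) ∂mA) ∂mT) +
      2 * (⨆ r ∈ Set.Ioo (0:ℝ) 1, ∫⁻ θ, (∫⁻ z₁, ENNReal.ofReal (‖d1 (fun z => φ z - ψ z) (z₁, (r:ℂ) * Complex.exp ((θ:ℂ) * Complex.I))‖ ^ 2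
          * poissonR μ z₁) ∂mA) ∂mT) := by
  apply iSup₂_le
  intro r hr
  obtain ⟨hr0, hr1⟩ := hr
  rw [tonelli_F1 μ hψ hr0 hr1]
  have hv : DifferentiableOn ℂ (fun z => φ z - ψ z) bidisc := hφ.sub hψ
  calc (∫⁻ p, F1 μ ψ r p ∂(mT.prod mA))
      ≤ ∫⁻ p, (2 * F1 μ φ r p + 2 * F1 μ (fun z => φ z - ψ z) r p) ∂(mT.prod mA) := by
        apply lintegral_mono_ae
        filter_upwards [prod_ae_ball] with p hp
        have hp' := hp
        rw [Metric.mem_ball, Complex.dist_eq, sub_zero] at hp'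
        have hzmem : (p.2, (r:ℂ) * Complex.exp ((p.1:ℂ) * Complex.I)) ∈ bidisc :=
          ⟨hp', by rw [abs_torus hr0.le]; exact hr1⟩
        have hsub := d1_sub hφ hψ hzmem
        have hP := poissonR_nonneg μ hp'
        simp only [F1]
        rw [hsub]
        exact ennreal_sq_split _ _ hP
    _ = 2 * (∫⁻ p, F1 μ φ r p ∂(mT.prod mA)) +
        2 * (∫⁻ p, F1 μ (fun z => φ z - ψ z) r p ∂(mT.prod mA)) := by
        rw [lintegral_add_left' ((aemeasurable_F1 μ hφ hr0 hr1).const_mul 2),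
          lintegral_const_mul' _ _ (by norm_num), lintegral_const_mul' _ _ (by norm_num)]
    _ ≤ _ := by
        apply add_le_add
        · apply mul_le_mul_right
          rw [← tonelli_F1 μ hφ hr0 hr1]
          exact le_iSup₂ (f := fun (r : ℝ) (_ : r ∈ Set.Ioo (0:ℝ) 1) => ∫⁻ θ, (∫⁻ z₁,
            ENNReal.ofReal (‖d1 φ (z₁, (r:ℂ) * Complex.exp ((θ:ℂ) * Complex.I))‖ ^ 2
              * poissonR μ z₁) ∂mA) ∂mT) r ⟨hr0, hr1⟩
        · apply mul_le_mul_right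
          rw [← tonelli_F1 μ hv hr0 hr1]
          exact le_iSup₂ (f := fun (r : ℝ) (_ : r ∈ Set.Ioo (0:ℝ) 1) => ∫⁻ θ, (∫⁻ z₁,
            ENNReal.ofReal (‖d1 (fun z => φ z - ψ z)
              (z₁, (r:ℂ) * Complex.exp ((θ:ℂ) * Complex.I))‖ ^ 2
              * poissonR μ z₁) ∂mA) ∂mT) r ⟨hr0, hr1⟩

lemma D2_split (μ : Measure (Metric.sphere (0:ℂ) 1)) [IsFiniteMeasure μ] {φ ψ : ℂ × ℂ → ℂ}
    (hφ : DifferentiableOn ℂ φ bidisc) (hψ : DifferentiableOn ℂ ψ bidisc) :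
    (⨆ r ∈ Set.Ioo (0:ℝ) 1, ∫⁻ θ, (∫⁻ z₂, ENNReal.ofReal (‖d2 ψ ((r:ℂ) * Complex.exp ((θ:ℂ) * Complex.I), z₂)‖ ^ 2 * poissonR μ z₂) ∂mA) ∂mT) ≤
      2 * (⨆ r ∈ Set.Ioo (0:ℝ) 1, ∫⁻ θ, (∫⁻ z₂, ENNReal.ofReal (‖d2 φ ((r:ℂ) * Complex.exp ((θ:ℂ) * Complex.I), z₂)‖ ^ 2 * poissonR μ z₂) ∂mA) ∂mT) +
      2 * (⨆ r ∈ Set.Ioo (0:ℝ) 1, ∫⁻ θ, (∫⁻ z₂, ENNReal.ofReal (‖d2 (fun z => φ z - ψ z) ((r:ℂ) * Complex.exp ((θ:ℂ) * Complex.I), z₂)‖ ^ 2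
          * poissonR μ z₂) ∂mA) ∂mT) := by
  apply iSup₂_le
  intro r hr
  obtain ⟨hr0, hr1⟩ := hr
  rw [tonelli_F2 μ hψ hr0 hr1]
  have hv : DifferentiableOn ℂ (fun z => φ z - ψ z) bidisc := hφ.sub hψ
  calc (∫⁻ p, F2 μ ψ r p ∂(mT.prod mA))
      ≤ ∫⁻ p, (2 * F2 μ φ r p + 2 * F2 μ (fun z => φ z - ψ z) r p) ∂(mT.prod mA) := by
        apply lintegral_mono_ae
        filter_upwards [prod_ae_ball] with p hp
        have hp' := hp
        rw [Metric.mem_ball, Complex.dist_eq, sub_zero] at hp'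
        have hzmem : ((r:ℂ) * Complex.exp ((p.1:ℂ) * Complex.I), p.2) ∈ bidisc :=
          ⟨by rw [abs_torus hr0.le]; exact hr1, hp'⟩
        have hsub := d2_sub hφ hψ hzmem
        have hP := poissonR_nonneg μ hp'
        simp only [F2]
        rw [hsub]
        exact ennreal_sq_split _ _ hP
    _ = 2 * (∫⁻ p, F2 μ φ r p ∂(mT.prod mA)) +
        2 * (∫⁻ p, F2 μ (fun z => φ z - ψ z) r p ∂(mT.prod mA)) := by
        rw [lintegral_add_left' ((aemeasurable_F2 μ hφ hr0 hr1).const_mul 2),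
          lintegral_const_mul' _ _ (by norm_num), lintegral_const_mul' _ _ (by norm_num)]
    _ ≤ _ := by
        apply add_le_add
        · apply mul_le_mul_right
          rw [← tonelli_F2 μ hφ hr0 hr1]
          exact le_iSup₂ (f := fun (r : ℝ) (_ : r ∈ Set.Ioo (0:ℝ) 1) => ∫⁻ θ, (∫⁻ z₂,
            ENNReal.ofReal (‖d2 φ ((r:ℂ) * Complex.exp ((θ:ℂ) * Complex.I), z₂)‖ ^ 2
              * poissonR μ z₂) ∂mA) ∂mT) r ⟨hr0, hr1⟩
        · apply mul_le_mul_right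
          rw [← tonelli_F2 μ hv hr0 hr1]
          exact le_iSup₂ (f := fun (r : ℝ) (_ : r ∈ Set.Ioo (0:ℝ) 1) => ∫⁻ θ, (∫⁻ z₂,
            ENNReal.ofReal (‖d2 (fun z => φ z - ψ z)
              (((r:ℂ) * Complex.exp ((θ:ℂ) * Complex.I), z₂))‖ ^ 2
              * poissonR μ z₂) ∂mA) ∂mT) r ⟨hr0, hr1⟩

lemma opnorm_le_d1_d2 (T : (ℂ × ℂ) →L[ℂ] ℂ) :
    ‖T‖ ≤ ‖T (1, 0)‖ + ‖T (0, 1)‖ := by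
  apply ContinuousLinearMap.opNorm_le_bound _ (by positivity)
  intro v
  have hv : v = v.1 • ((1:ℂ), (0:ℂ)) + v.2 • ((0:ℂ), (1:ℂ)) := by
    simp [Prod.ext_iff]
  calc ‖T v‖ = ‖v.1 • T (1, 0) + v.2 • T (0, 1)‖ := by
        rw [← T.map_smul, ← T.map_smul, ← T.map_add, ← hv]
    _ ≤ ‖v.1 • T (1, 0)‖ + ‖v.2 • T (0, 1)‖ := norm_add_le _ _
    _ = ‖v.1‖ * ‖T (1, 0)‖ + ‖v.2‖ * ‖T (0, 1)‖ := by rw [norm_smul, norm_smul]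
    _ ≤ ‖v‖ * ‖T (1, 0)‖ + ‖v‖ * ‖T (0, 1)‖ :=
        add_le_add (mul_le_mul_of_nonneg_right (norm_fst_le v) (norm_nonneg _))
          (mul_le_mul_of_nonneg_right (norm_snd_le v) (norm_nonneg _))
    _ = (‖T (1, 0)‖ + ‖T (0, 1)‖) * ‖v‖ := by ring

/-- The Dirichlet-type space `D(μ₁,μ₂)` is complete: every Cauchy sequence in the
`D(μ₁,μ₂)`-norm converges in the `D(μ₁,μ₂)`-norm to a member of `D(μ₁,μ₂)`. -/
theorem stmt7 (μ₁ μ₂ : Measure (Metric.sphere (0:ℂ) 1))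
    [IsFiniteMeasure μ₁] [IsFiniteMeasure μ₂]
    (f : ℕ → ℂ × ℂ → ℂ) (hf : ∀ n, MemD μ₁ μ₂ (f n))
    (hcauchy : ∀ ε : ℝ, 0 < ε → ∃ N : ℕ, ∀ m n : ℕ, N ≤ m → N ≤ n →
      Dnorm2 μ₁ μ₂ (fun z => f n z - f m z) < ENNReal.ofReal ε) :
    ∃ g : ℂ × ℂ → ℂ, MemD μ₁ μ₂ g ∧ ∀ ε : ℝ, 0 < ε → ∃ N : ℕ, ∀ n : ℕ, N ≤ n →
      Dnorm2 μ₁ μ₂ (fun z => f n z - g z) < ENNReal.ofReal ε := by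
  have hdiffsub : ∀ n m : ℕ, DifferentiableOn ℂ (fun z => f n z - f m z) bidisc :=
    fun n m => (hf n).1.sub (hf m).1
  -- master uniform estimate
  have master : ∀ s : ℝ, 0 ≤ s → s < 1 → ∀ δ : ℝ, 0 < δ → ∃ N : ℕ, ∀ n m : ℕ,
      N ≤ n → N ≤ m → ∀ z : ℂ × ℂ, ‖z.1‖ ≤ s → ‖z.2‖ ≤ s →
      ‖f n z - f m z‖ ≤ δ := by
    intro s hs0 hs1 δ hδ
    set r : ℝ := (s + 1) / 2 with hrdef
    have hsr : s < r := by rw [hrdef]; linarith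
    have hr1 : r < 1 := by rw [hrdef]; linarith
    have hr0 : 0 < r := lt_of_le_of_lt hs0 hsr
    have hrs : 0 < r - s := by linarith
    set Creal : ℝ := (r / (r - s)) ^ 2 with hCdef
    have hC : 0 < Creal := by positivity
    obtain ⟨N, hN⟩ := hcauchy ((δ / Creal) ^ 2) (by positivity)
    refine ⟨N, fun n m hn hm z hz1 hz2 => ?_⟩
    have hb := pointwise_bound (hdiffsub n m) hs0 hsr hr1 hz1 hz2
    have hH : H2norm2 (fun z => f n z - f m z) ≤ ENNReal.ofReal ((δ / Creal) ^ 2) :=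
      le_trans le_self_add (hN m n hm hn).le
    have h2 : (H2norm2 (fun z => f n z - f m z)) ^ (1/2 : ℝ) ≤ ENNReal.ofReal (δ / Creal) := by
      calc (H2norm2 (fun z => f n z - f m z)) ^ (1/2 : ℝ)
          ≤ (ENNReal.ofReal ((δ / Creal) ^ 2)) ^ (1/2 : ℝ) :=
            ENNReal.rpow_le_rpow hH (by norm_num)
        _ = ENNReal.ofReal (δ / Creal) := by
            rw [← ofReal_sq_rpow (by positivity : (0:ℝ) ≤ δ / Creal), ← ENNReal.rpow_mul]
            norm_num
    have h3 : ENNReal.ofReal (‖f n z - f m z‖) ≤ ENNReal.ofReal δ := by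
      calc ENNReal.ofReal (‖f n z - f m z‖)
          ≤ (ENNReal.ofReal (r / (r - s))) ^ 2 *
              (H2norm2 (fun z => f n z - f m z)) ^ (1/2 : ℝ) := hb
        _ ≤ (ENNReal.ofReal (r / (r - s))) ^ 2 * ENNReal.ofReal (δ / Creal) :=
            mul_le_mul_right h2 _
        _ = ENNReal.ofReal Creal * ENNReal.ofReal (δ / Creal) := by
            rw [hCdef, ENNReal.ofReal_pow (by positivity)]
        _ = ENNReal.ofReal (Creal * (δ / Creal)) := by
            rw [ENNReal.ofReal_mul hC.le]
        _ = ENNReal.ofReal δ := by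
            rw [mul_div_cancel₀ _ hC.ne']
    rwa [ENNReal.ofReal_le_ofReal_iff hδ.le] at h3
  -- pointwise convergence; definition of g
  have cauchyPt : ∀ z ∈ bidisc, CauchySeq (fun n => f n z) := by
    intro z hz
    rw [Metric.cauchySeq_iff]
    intro ε hε
    have hs0 : 0 ≤ max (‖z.1‖) (‖z.2‖) :=
      le_trans (norm_nonneg _) (le_max_left _ _)
    obtain ⟨N, hN⟩ := master (max (‖z.1‖) (‖z.2‖)) hs0
      (max_lt hz.1 hz.2) (ε/2) (by positivity)
    refine ⟨N, fun m hm n hn => ?_⟩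
    have := hN m n hm hn z (le_max_left _ _) (le_max_right _ _)
    rw [Complex.dist_eq]
    calc ‖f m z - f n z‖ ≤ ε / 2 := this
      _ < ε := by linarith
  set g : ℂ × ℂ → ℂ := fun z => Filter.limUnder Filter.atTop (fun n => f n z) with hgdef
  have hgt : ∀ z ∈ bidisc, Filter.Tendsto (fun n => f n z) Filter.atTop (nhds (g z)) :=
    fun z hz => (cauchyPt z hz).tendsto_limUnder
  -- uniform closeness to g
  have masterg : ∀ s : ℝ, 0 ≤ s → s < 1 → ∀ δ : ℝ, 0 < δ → ∃ N : ℕ, ∀ n : ℕ, N ≤ n →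
      ∀ z : ℂ × ℂ, ‖z.1‖ ≤ s → ‖z.2‖ ≤ s →
      ‖f n z - g z‖ ≤ δ := by
    intro s hs0 hs1 δ hδ
    obtain ⟨N, hN⟩ := master s hs0 hs1 δ hδ
    refine ⟨N, fun n hn z hz1 hz2 => ?_⟩
    have hzb : z ∈ bidisc := ⟨lt_of_le_of_lt hz1 hs1, lt_of_le_of_lt hz2 hs1⟩
    have hlim : Filter.Tendsto (fun m => ‖f n z - f m z‖) Filter.atTop
        (nhds (‖f n z - g z‖)) :=
      (continuous_norm.tendsto _).comp (tendsto_const_nhds.sub (hgt z hzb))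
    apply le_of_tendsto hlim
    filter_upwards [Filter.eventually_ge_atTop N] with m hm
    exact hN n m hn hm z hz1 hz2
  -- uniform Cauchy estimates for the partial derivatives
  have masterd : ∀ s : ℝ, 0 ≤ s → s < 1 → ∀ δ : ℝ, 0 < δ → ∃ N : ℕ, ∀ n m : ℕ,
      N ≤ n → N ≤ m → ∀ z : ℂ × ℂ, ‖z.1‖ ≤ s → ‖z.2‖ ≤ s →
      ‖d1 (f n) z - d1 (f m) z‖ ≤ δ ∧
      ‖d2 (f n) z - d2 (f m) z‖ ≤ δ := by
    intro s hs0 hs1 δ hδ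
    set ρ : ℝ := (1 - s) / 2 with hρdef
    have hρ : 0 < ρ := by rw [hρdef]; linarith
    have hs'1 : s + ρ < 1 := by rw [hρdef]; linarith
    obtain ⟨N, hN⟩ := master (s + ρ) (by linarith) hs'1 (δ * ρ) (by positivity)
    refine ⟨N, fun n m hn hm z hz1 hz2 => ?_⟩
    have hzb : z ∈ bidisc := ⟨lt_of_le_of_lt hz1 hs1, lt_of_le_of_lt hz2 hs1⟩
    constructor
    · -- first partial derivative
      have hzb2 : ‖z.2‖ < 1 := lt_of_le_of_lt hz2 hs1
      have hu : DifferentiableOn ℂ (fun w => f n (w, z.2) - f m (w, z.2))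
          (Metric.ball (0:ℂ) 1) := slice1_diff (hdiffsub n m) hzb2
      have hDCC : DiffContOnCl ℂ (fun w => f n (w, z.2) - f m (w, z.2))
          (Metric.ball z.1 ρ) := by
        apply DifferentiableOn.diffContOnCl
        apply hu.mono
        intro w hw
        rw [closure_ball z.1 hρ.ne'] at hw
        rw [Metric.mem_closedBall, Complex.dist_eq] at hw
        rw [Metric.mem_ball, Complex.dist_eq, sub_zero]
        have : ‖w‖ ≤ ‖z.1‖ + ‖w - z.1‖ := by
          simpa using norm_add_le z.1 (w - z.1)
        calc ‖w‖ ≤ ‖z.1‖ + ‖w - z.1‖ := this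
          _ ≤ s + ρ := add_le_add hz1 hw
          _ < 1 := hs'1
      have hbound : ∀ w ∈ Metric.sphere z.1 ρ, ‖f n (w, z.2) - f m (w, z.2)‖ ≤ δ * ρ := by
        intro w hw
        rw [Metric.mem_sphere, Complex.dist_eq] at hw
        have habs : ‖w‖ ≤ s + ρ := by
          have : ‖w‖ ≤ ‖z.1‖ + ‖w - z.1‖ := by
            simpa using norm_add_le z.1 (w - z.1)
          rw [hw] at this
          linarith
        have := hN n m hn hm (w, z.2) habs (by simpa using hz2.trans (by linarith : s ≤ s + ρ))
        simpa using this
      have hkey := Complex.norm_deriv_le_of_forall_mem_sphere_norm_le hρ hDCC hbound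
      have hderiv : deriv (fun w => f n (w, z.2) - f m (w, z.2)) z.1 =
          d1 (f n) z - d1 (f m) z :=
        deriv_sub (slice1_diffAt (hf n).1 hzb) (slice1_diffAt (hf m).1 hzb)
      rw [hderiv] at hkey
      calc ‖d1 (f n) z - d1 (f m) z‖ ≤ δ * ρ / ρ := hkey
        _ = δ := by field_simp
    · -- second partial derivative
      have hzb1 : ‖z.1‖ < 1 := lt_of_le_of_lt hz1 hs1
      have hu : DifferentiableOn ℂ (fun w => f n (z.1, w) - f m (z.1, w))
          (Metric.ball (0:ℂ) 1) := slice2_diff (hdiffsub n m) hzb1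
      have hDCC : DiffContOnCl ℂ (fun w => f n (z.1, w) - f m (z.1, w))
          (Metric.ball z.2 ρ) := by
        apply DifferentiableOn.diffContOnCl
        apply hu.mono
        intro w hw
        rw [closure_ball z.2 hρ.ne'] at hw
        rw [Metric.mem_closedBall, Complex.dist_eq] at hw
        rw [Metric.mem_ball, Complex.dist_eq, sub_zero]
        have : ‖w‖ ≤ ‖z.2‖ + ‖w - z.2‖ := by
          simpa using norm_add_le z.2 (w - z.2)
        calc ‖w‖ ≤ ‖z.2‖ + ‖w - z.2‖ := this
          _ ≤ s + ρ := add_le_add hz2 hw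
          _ < 1 := hs'1
      have hbound : ∀ w ∈ Metric.sphere z.2 ρ, ‖f n (z.1, w) - f m (z.1, w)‖ ≤ δ * ρ := by
        intro w hw
        rw [Metric.mem_sphere, Complex.dist_eq] at hw
        have habs : ‖w‖ ≤ s + ρ := by
          have : ‖w‖ ≤ ‖z.2‖ + ‖w - z.2‖ := by
            simpa using norm_add_le z.2 (w - z.2)
          rw [hw] at this
          linarith
        have := hN n m hn hm (z.1, w) (by simpa using hz1.trans (by linarith : s ≤ s + ρ)) habs
        simpa using this
      have hkey := Complex.norm_deriv_le_of_forall_mem_sphere_norm_le hρ hDCC hbound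
      have hderiv : deriv (fun w => f n (z.1, w) - f m (z.1, w)) z.2 =
          d2 (f n) z - d2 (f m) z :=
        deriv_sub (slice2_diffAt (hf n).1 hzb) (slice2_diffAt (hf m).1 hzb)
      rw [hderiv] at hkey
      calc ‖d2 (f n) z - d2 (f m) z‖ ≤ δ * ρ / ρ := hkey
        _ = δ := by field_simp
  -- Cauchy property for Fréchet derivatives
  have hfd : ∀ (k : ℕ), ∀ z ∈ bidisc, HasFDerivAt (f k) (fderiv ℂ (f k) z) z :=
    fun k z hz => ((hf k).1.differentiableAt (isOpen_bidisc.mem_nhds hz)).hasFDerivAt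
  have hd1f : ∀ (k : ℕ), ∀ z ∈ bidisc, d1 (f k) z = fderiv ℂ (f k) z (1, 0) :=
    fun k z hz => d1_of_hasFDerivAt (hfd k z hz)
  have hd2f : ∀ (k : ℕ), ∀ z ∈ bidisc, d2 (f k) z = fderiv ℂ (f k) z (0, 1) :=
    fun k z hz => d2_of_hasFDerivAt (hfd k z hz)
  have normFD : ∀ n m : ℕ, ∀ z ∈ bidisc,
      ‖fderiv ℂ (f n) z - fderiv ℂ (f m) z‖ ≤
        ‖d1 (f n) z - d1 (f m) z‖ + ‖d2 (f n) z - d2 (f m) z‖ := by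
    intro n m z hz
    have h := opnorm_le_d1_d2 (fderiv ℂ (f n) z - fderiv ℂ (f m) z)
    have e1 : (fderiv ℂ (f n) z - fderiv ℂ (f m) z) ((1:ℂ), (0:ℂ)) =
        d1 (f n) z - d1 (f m) z := by
      rw [ContinuousLinearMap.sub_apply, hd1f n z hz, hd1f m z hz]
    have e2 : (fderiv ℂ (f n) z - fderiv ℂ (f m) z) ((0:ℂ), (1:ℂ)) =
        d2 (f n) z - d2 (f m) z := by
      rw [ContinuousLinearMap.sub_apply, hd2f n z hz, hd2f m z hz]
    rw [e1, e2] at h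
    simpa using h
  have cauchyFD : ∀ z ∈ bidisc, CauchySeq (fun n => fderiv ℂ (f n) z) := by
    intro z hz
    rw [Metric.cauchySeq_iff]
    intro ε hε
    have hs0 : 0 ≤ max (‖z.1‖) (‖z.2‖) :=
      le_trans (norm_nonneg _) (le_max_left _ _)
    obtain ⟨N, hN⟩ := masterd (max (‖z.1‖) (‖z.2‖)) hs0
      (max_lt hz.1 hz.2) (ε/3) (by positivity)
    refine ⟨N, fun m hm n hn => ?_⟩
    obtain ⟨h1, h2⟩ := hN m n hm hn z (le_max_left _ _) (le_max_right _ _)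
    rw [dist_eq_norm]
    calc ‖fderiv ℂ (f m) z - fderiv ℂ (f n) z‖
        ≤ ‖d1 (f m) z - d1 (f n) z‖ + ‖d2 (f m) z - d2 (f n) z‖ :=
          normFD m n z hz
      _ ≤ ε/3 + ε/3 := add_le_add h1 h2
      _ < ε := by linarith
  set g' : ℂ × ℂ → (ℂ × ℂ) →L[ℂ] ℂ :=
    fun z => Filter.limUnder Filter.atTop (fun n => fderiv ℂ (f n) z) with hg'def
  have hg't : ∀ z ∈ bidisc, Filter.Tendsto (fun n => fderiv ℂ (f n) z) Filter.atTop
      (nhds (g' z)) := fun z hz => (cauchyFD z hz).tendsto_limUnder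
  -- locally uniform convergence of the derivatives
  have hTLU : TendstoLocallyUniformlyOn (fun n z => fderiv ℂ (f n) z) g'
      Filter.atTop bidisc := by
    rw [tendstoLocallyUniformlyOn_iff_forall_isCompact isOpen_bidisc]
    intro K hK hKc
    rcases K.eq_empty_or_nonempty with hKe | hne
    · rw [hKe]; exact tendstoUniformlyOn_empty
    · have hcont : Continuous fun z : ℂ × ℂ => max (‖z.1‖) (‖z.2‖) :=
        (continuous_norm.comp continuous_fst).max
          (continuous_norm.comp continuous_snd)
      obtain ⟨z₀, hz₀K, hz₀max⟩ := hKc.exists_isMaxOn hne hcont.continuousOn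
      set s := max (‖z₀.1‖) (‖z₀.2‖) with hsdef
      have hs0 : 0 ≤ s := le_trans (norm_nonneg _) (le_max_left _ _)
      have hs1 : s < 1 := max_lt (hK hz₀K).1 (hK hz₀K).2
      rw [Metric.tendstoUniformlyOn_iff]
      intro ε hε
      obtain ⟨N, hN⟩ := masterd s hs0 hs1 (ε/4) (by positivity)
      filter_upwards [Filter.eventually_ge_atTop N] with n hn
      intro z hzK
      have hzb : z ∈ bidisc := hK hzK
      have hz1 : ‖z.1‖ ≤ s := le_trans (le_max_left _ _) (hz₀max hzK)
      have hz2 : ‖z.2‖ ≤ s := le_trans (le_max_right _ _) (hz₀max hzK)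
      have hbd : ∀ m : ℕ, N ≤ m → dist (fderiv ℂ (f m) z) (fderiv ℂ (f n) z) ≤ ε/2 := by
        intro m hm
        obtain ⟨h1, h2⟩ := hN m n hm hn z hz1 hz2
        rw [dist_eq_norm]
        calc ‖fderiv ℂ (f m) z - fderiv ℂ (f n) z‖
            ≤ ‖d1 (f m) z - d1 (f n) z‖ +
              ‖d2 (f m) z - d2 (f n) z‖ := normFD m n z hzb
          _ ≤ ε/4 + ε/4 := add_le_add h1 h2
          _ = ε/2 := by ring
      have hlim : Filter.Tendsto (fun m => dist (fderiv ℂ (f m) z) (fderiv ℂ (f n) z))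
          Filter.atTop (nhds (dist (g' z) (fderiv ℂ (f n) z))) :=
        (hg't z hzb).dist tendsto_const_nhds
      have : dist (g' z) (fderiv ℂ (f n) z) ≤ ε/2 := by
        apply le_of_tendsto hlim
        filter_upwards [Filter.eventually_ge_atTop N] with m hm
        exact hbd m hm
      calc dist (g' z) ((fun n z => fderiv ℂ (f n) z) n z) = dist (g' z) (fderiv ℂ (f n) z) :=
            rfl
        _ ≤ ε/2 := this
        _ < ε := by linarith
  -- g is holomorphic with derivative g'
  have hgFD : ∀ z ∈ bidisc, HasFDerivAt g (g' z) z := fun z hz =>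
    hasFDerivAt_of_tendstoLocallyUniformlyOn isOpen_bidisc hTLU
      (fun k x hx => hfd k x hx) hgt hz
  have hgdiff : DifferentiableOn ℂ g bidisc := fun z hz =>
    ((hgFD z hz).differentiableAt).differentiableWithinAt
  -- convergence of the partial derivatives
  have hd1conv : ∀ z ∈ bidisc, Filter.Tendsto (fun m => d1 (f m) z) Filter.atTop
      (nhds (d1 g z)) := by
    intro z hz
    have h1 : d1 g z = g' z (1, 0) := d1_of_hasFDerivAt (hgFD z hz)
    have heval : Filter.Tendsto (fun m => fderiv ℂ (f m) z ((1:ℂ), (0:ℂ))) Filter.atTop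
        (nhds (g' z ((1:ℂ), (0:ℂ)))) := by
      have hc : Continuous fun T : (ℂ × ℂ) →L[ℂ] ℂ => T ((1:ℂ), (0:ℂ)) := by
        exact (ContinuousLinearMap.apply ℂ ℂ ((1:ℂ), (0:ℂ))).continuous
      exact (hc.tendsto _).comp (hg't z hz)
    rw [h1]
    apply heval.congr
    intro m
    exact (hd1f m z hz).symm
  have hd2conv : ∀ z ∈ bidisc, Filter.Tendsto (fun m => d2 (f m) z) Filter.atTop
      (nhds (d2 g z)) := by
    intro z hz
    have h1 : d2 g z = g' z (0, 1) := d2_of_hasFDerivAt (hgFD z hz)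
    have heval : Filter.Tendsto (fun m => fderiv ℂ (f m) z ((0:ℂ), (1:ℂ))) Filter.atTop
        (nhds (g' z ((0:ℂ), (1:ℂ)))) := by
      have hc : Continuous fun T : (ℂ × ℂ) →L[ℂ] ℂ => T ((0:ℂ), (1:ℂ)) := by
        exact (ContinuousLinearMap.apply ℂ ℂ ((0:ℂ), (1:ℂ))).continuous
      exact (hc.tendsto _).comp (hg't z hz)
    rw [h1]
    apply heval.congr
    intro m
    exact (hd2f m z hz).symm
  -- the main convergence statement
  have hconv : ∀ ε : ℝ, 0 < ε → ∃ N : ℕ, ∀ n : ℕ, N ≤ n →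
      Dnorm2 μ₁ μ₂ (fun z => f n z - g z) < ENNReal.ofReal ε := by
    intro ε hε
    obtain ⟨N, hN⟩ := hcauchy (ε/4) (by positivity)
    refine ⟨N, fun n hn => ?_⟩
    set L := ENNReal.ofReal (ε/4) with hLdef
    have hliminfL : Filter.liminf (fun m => Dnorm2 μ₁ μ₂ (fun z => f n z - f m z))
        Filter.atTop ≤ L := by
      have h1 : Filter.liminf (fun m => Dnorm2 μ₁ μ₂ (fun z => f n z - f m z))
          Filter.atTop ≤ Filter.liminf (fun _ : ℕ => L) Filter.atTop :=
        Filter.liminf_le_liminf (by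
          filter_upwards [Filter.eventually_ge_atTop N] with m hm
          exact (hN m n hm hn).le)
      rwa [Filter.liminf_const] at h1
    -- component bounds via Fatou
    have hcomp1 : H2norm2 (fun z => f n z - g z) ≤ L := by
      have hfat := fatou_H (φ := fun m => fun z => f n z - f m z)
        (ψ := fun z => f n z - g z)
        (fun m => (hdiffsub n m).continuousOn) ((hf n).1.sub hgdiff).continuousOn
        (fun z hz => tendsto_const_nhds.sub (hgt z hz))
      apply le_trans hfat
      apply le_trans _ hliminfL
      exact Filter.liminf_le_liminf (by
        filter_upwards with m
        exact le_self_add)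
    have hcomp2 : (⨆ r ∈ Set.Ioo (0:ℝ) 1, ∫⁻ θ, (∫⁻ z₁, ENNReal.ofReal (‖d1 (fun z => f n z - g z) (z₁, (r:ℂ) * Complex.exp ((θ:ℂ) * Complex.I))‖ ^ 2
          * poissonR μ₁ z₁) ∂mA) ∂mT) ≤ L := by
      have hfat := fatou_D1 μ₁ (φ := fun m => fun z => f n z - f m z)
        (ψ := fun z => f n z - g z)
        (fun m => hdiffsub n m) ((hf n).1.sub hgdiff)
        (by
          intro z hz
          rw [d1_sub (hf n).1 hgdiff hz]
          apply Filter.Tendsto.congr _ (tendsto_const_nhds.sub (hd1conv z hz))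
          intro m
          exact (d1_sub (hf n).1 (hf m).1 hz).symm)
      apply le_trans hfat
      apply le_trans _ hliminfL
      refine Filter.liminf_le_liminf (Filter.Eventually.of_forall (fun m => ?_))
      calc (⨆ r ∈ Set.Ioo (0:ℝ) 1, ∫⁻ θ, (∫⁻ z₁, ENNReal.ofReal (‖d1 (fun z => f n z - f m z) (z₁, (r:ℂ) * Complex.exp ((θ:ℂ) * Complex.I))‖ ^ 2
            * poissonR μ₁ z₁) ∂mA) ∂mT)
          ≤ Dint μ₁ μ₂ (fun z => f n z - f m z) := le_self_add
        _ ≤ Dnorm2 μ₁ μ₂ (fun z => f n z - f m z) := le_add_self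
    have hcomp3 : (⨆ r ∈ Set.Ioo (0:ℝ) 1, ∫⁻ θ, (∫⁻ z₂, ENNReal.ofReal (‖d2 (fun z => f n z - g z) ((r:ℂ) * Complex.exp ((θ:ℂ) * Complex.I), z₂)‖ ^ 2
          * poissonR μ₂ z₂) ∂mA) ∂mT) ≤ L := by
      have hfat := fatou_D2 μ₂ (φ := fun m => fun z => f n z - f m z)
        (ψ := fun z => f n z - g z)
        (fun m => hdiffsub n m) ((hf n).1.sub hgdiff)
        (by
          intro z hz
          rw [d2_sub (hf n).1 hgdiff hz]
          apply Filter.Tendsto.congr _ (tendsto_const_nhds.sub (hd2conv z hz))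
          intro m
          exact (d2_sub (hf n).1 (hf m).1 hz).symm)
      apply le_trans hfat
      apply le_trans _ hliminfL
      refine Filter.liminf_le_liminf (Filter.Eventually.of_forall (fun m => ?_))
      calc (⨆ r ∈ Set.Ioo (0:ℝ) 1, ∫⁻ θ, (∫⁻ z₂, ENNReal.ofReal (‖d2 (fun z => f n z - f m z) ((r:ℂ) * Complex.exp ((θ:ℂ) * Complex.I), z₂)‖ ^ 2
            * poissonR μ₂ z₂) ∂mA) ∂mT)
          ≤ Dint μ₁ μ₂ (fun z => f n z - f m z) := le_add_self
        _ ≤ Dnorm2 μ₁ μ₂ (fun z => f n z - f m z) := le_add_self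
    have htotal : Dnorm2 μ₁ μ₂ (fun z => f n z - g z) ≤ L + (L + L) := by
      unfold Dnorm2 Dint
      exact add_le_add hcomp1 (add_le_add hcomp2 hcomp3)
    apply lt_of_le_of_lt htotal
    rw [hLdef, ← ENNReal.ofReal_add (by positivity) (by positivity),
      ← ENNReal.ofReal_add (by positivity) (by positivity)]
    rw [ENNReal.ofReal_lt_ofReal_iff hε]
    linarith
  -- membership of g in the Dirichlet space
  obtain ⟨N₁, hN₁⟩ := hconv 1 one_pos
  have hdiffN : Dnorm2 μ₁ μ₂ (fun z => f N₁ z - g z) < ⊤ :=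
    lt_of_lt_of_le (hN₁ N₁ le_rfl) le_top
  have hHdiff : H2norm2 (fun z => f N₁ z - g z) < ⊤ :=
    lt_of_le_of_lt le_self_add hdiffN
  have hD1diff : (⨆ r ∈ Set.Ioo (0:ℝ) 1, ∫⁻ θ, (∫⁻ z₁, ENNReal.ofReal (‖d1 (fun z => f N₁ z - g z) (z₁, (r:ℂ) * Complex.exp ((θ:ℂ) * Complex.I))‖ ^ 2
        * poissonR μ₁ z₁) ∂mA) ∂mT) < ⊤ := by
    apply lt_of_le_of_lt _ hdiffN
    apply le_trans le_self_add (le_add_self (a := Dint μ₁ μ₂ (fun z => f N₁ z - g z)))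
  have hD2diff : (⨆ r ∈ Set.Ioo (0:ℝ) 1, ∫⁻ θ, (∫⁻ z₂, ENNReal.ofReal (‖d2 (fun z => f N₁ z - g z) ((r:ℂ) * Complex.exp ((θ:ℂ) * Complex.I), z₂)‖ ^ 2
        * poissonR μ₂ z₂) ∂mA) ∂mT) < ⊤ := by
    apply lt_of_le_of_lt _ hdiffN
    apply le_trans le_add_self (le_add_self (a := Dint μ₁ μ₂ (fun z => f N₁ z - g z)))
  have hHg : H2norm2 g < ⊤ := by
    have hsplit := H2_split (φ := f N₁) (ψ := g) (hf N₁).1.continuousOn hgdiff.continuousOn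
    apply lt_of_le_of_lt hsplit
    apply ENNReal.add_lt_top.2
    constructor
    · exact ENNReal.mul_lt_top (by norm_num) (hf N₁).2.1
    · exact ENNReal.mul_lt_top (by norm_num) hHdiff
  have hDg : Dint μ₁ μ₂ g < ⊤ := by
    have hs1 := D1_split μ₁ (φ := f N₁) (ψ := g) (hf N₁).1 hgdiff
    have hs2 := D2_split μ₂ (φ := f N₁) (ψ := g) (hf N₁).1 hgdiff
    have hfN1 : (⨆ r ∈ Set.Ioo (0:ℝ) 1, ∫⁻ θ, (∫⁻ z₁, ENNReal.ofReal (‖d1 (f N₁) (z₁, (r:ℂ) * Complex.exp ((θ:ℂ) * Complex.I))‖ ^ 2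
          * poissonR μ₁ z₁) ∂mA) ∂mT) < ⊤ :=
      lt_of_le_of_lt le_self_add (hf N₁).2.2
    have hfN2 : (⨆ r ∈ Set.Ioo (0:ℝ) 1, ∫⁻ θ, (∫⁻ z₂, ENNReal.ofReal (‖d2 (f N₁) ((r:ℂ) * Complex.exp ((θ:ℂ) * Complex.I), z₂)‖ ^ 2
          * poissonR μ₂ z₂) ∂mA) ∂mT) < ⊤ :=
      lt_of_le_of_lt le_add_self (hf N₁).2.2
    unfold Dint
    apply ENNReal.add_lt_top.2
    constructor
    · apply lt_of_le_of_lt hs1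
      apply ENNReal.add_lt_top.2
      exact ⟨ENNReal.mul_lt_top (by norm_num) hfN1, ENNReal.mul_lt_top (by norm_num) hD1diff⟩
    · apply lt_of_le_of_lt hs2
      apply ENNReal.add_lt_top.2
      exact ⟨ENNReal.mul_lt_top (by norm_num) hfN2, ENNReal.mul_lt_top (by norm_num) hD2diff⟩
  exact ⟨g, ⟨hgdiff, hHg, hDg⟩, hconv⟩
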